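/- arXiv:1411.0724 — 3 statements merged into one kernel-verified Lean document; each statement's English description precedes it below -/
import Mathlib

section
/- Let C be an [n,k]_q linear code and P a poset on [n]. If C' = (C'; C'_0; C'_1,...,C'_r) and C'' = (C''; C''_0; C''_1,...,C''_s) are two maximal P-decompositions of C, with profiles [(n'_0,k'_0),(n'_1,k'_1),...,(n'_r,k'_r)] and [(n''_0,k''_0),(n''_1,k''_1),...,(n''_s,k''_s)], then r = s, (n'_0,k'_0) = (n''_0,k''_0), and there is a permutation σ of {1,...,r} such that (n'_i,k'_i) = (n''_{σ(i)},k''_{σ(i)}) for all i. -/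
/-- `I` is an ideal of the poset `P` on `[n]`. -/
def IsPosetIdeal {n : ℕ} (P : PartialOrder (Fin n)) (I : Set (Fin n)) : Prop :=
  ∀ i ∈ I, ∀ j, P.le j i → j ∈ I

/-- The smallest ideal of `P` containing `X`. -/
def idealGen {n : ℕ} (P : PartialOrder (Fin n)) (X : Set (Fin n)) : Set (Fin n) :=
  ⋂₀ {I | IsPosetIdeal P I ∧ X ⊆ I}

/-- The `P`-weight `ω_P(x) = |⟨supp(x)⟩|`. -/
noncomputable def posetWeight {F : Type*} [Field F] {n : ℕ} (P : PartialOrder (Fin n))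
    (x : Fin n → F) : ℕ :=
  (idealGen P {i | x i ≠ 0}).ncard

/-- The `P`-distance `d_P(x,y) = ω_P(x - y)`. -/
noncomputable def posetDist {F : Type*} [Field F] {n : ℕ} (P : PartialOrder (Fin n))
    (x y : Fin n → F) : ℕ :=
  posetWeight P (x - y)

/-- A linear `P`-isometry of `F_q^n`. -/
def IsPIsometry {F : Type*} [Field F] {n : ℕ} (P : PartialOrder (Fin n))
    (T : (Fin n → F) ≃ₗ[F] (Fin n → F)) : Prop :=
  ∀ x y, posetDist P (T x) (T y) = posetDist P x y

/-- The support of a subspace `D ⊆ F_q^n`. -/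
def suppS {F : Type*} [Field F] {n : ℕ} (D : Submodule F (Fin n → F)) : Set (Fin n) :=
  {j | ∃ x ∈ D, x j ≠ 0}

/-- `C_0`: the subspace of all vectors vanishing on the support of `C`. -/
def coSupp {F : Type*} [Field F] {n : ℕ} (C : Submodule F (Fin n → F)) :
    Submodule F (Fin n → F) where
  carrier := {x | ∀ j ∈ suppS C, x j = 0}
  add_mem' := by
    intro a b ha hb j hj
    simp only [Set.mem_setOf_eq] at ha hb ⊢
    rw [Pi.add_apply, ha j hj, hb j hj, add_zero]
  zero_mem' := by intro j _; rfl
  smul_mem' := by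
    intro c a ha j hj
    simp only [Set.mem_setOf_eq] at ha ⊢
    rw [Pi.smul_apply, ha j hj, smul_zero]

/-- A decomposition `(C; C_0; C_1, …, C_r)` of a linear code `C ⊆ F_q^n`:
nonzero subspaces `C_1, …, C_r` with pairwise disjoint supports whose internal
direct sum is `C`.  (The distinguished part `C_0 = coSupp C` is determined by `C`.) -/
structure Decomposition {F : Type*} [Field F] {n : ℕ} (C : Submodule F (Fin n → F)) where
  r : ℕ
  D : Fin r → Submodule F (Fin n → F)
  ne_bot : ∀ i, D i ≠ ⊥
  indep : iSupIndep D
  sup_eq : ⨆ i, D i = C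
  disj : Pairwise fun i j => Disjoint (suppS (D i)) (suppS (D j))

/-- A `P`-decomposition of `C`: a decomposition of a code `C'` that is
`P`-equivalent to `C`. -/
structure PDecomposition {F : Type*} [Field F] {n : ℕ} (P : PartialOrder (Fin n))
    (C : Submodule F (Fin n → F)) where
  C' : Submodule F (Fin n → F)
  T : (Fin n → F) ≃ₗ[F] (Fin n → F)
  isom : IsPIsometry P T
  image : Submodule.map (T : (Fin n → F) →ₗ[F] (Fin n → F)) C = C'
  dec : Decomposition C'

/-- A trivial `P`-decomposition of `C`: a single component, with
`|supp(C')| = |supp(C)|` and `|supp(C'_0)| = |supp(C_0)|`. -/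
def PDecomposition.IsTrivial {F : Type*} [Field F] {n : ℕ} {P : PartialOrder (Fin n)}
    {C : Submodule F (Fin n → F)} (d : PDecomposition P C) : Prop :=
  d.dec.r = 1 ∧ (suppS d.C').ncard = (suppS C).ncard ∧
    (suppS (coSupp d.C')).ncard = (suppS (coSupp C)).ncard

/-- A code is `P`-irreducible if it admits no non-trivial `P`-decomposition. -/
def PIrreducible {F : Type*} [Field F] {n : ℕ} (P : PartialOrder (Fin n))
    (C : Submodule F (Fin n → F)) : Prop :=
  ∀ d : PDecomposition P C, d.IsTrivial

/-- A `P`-decomposition is maximal if each of its components is `P`-irreducible. -/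
def PDecomposition.IsMaximal {F : Type*} [Field F] {n : ℕ} {P : PartialOrder (Fin n)}
    {C : Submodule F (Fin n → F)} (d : PDecomposition P C) : Prop :=
  ∀ i, PIrreducible P (d.dec.D i)


/-! ### Auxiliary lemmas -/

section Aux

variable {F : Type*} [Field F] {n : ℕ} {P : PartialOrder (Fin n)}

lemma isPosetIdeal_idealGen (X : Set (Fin n)) : IsPosetIdeal P (idealGen P X) := by
  intro i hi j hji I hI
  exact hI.1 i (hi I hI) j hji

lemma subset_idealGen (X : Set (Fin n)) : X ⊆ idealGen P X := by
  intro x hx I hI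
  exact hI.2 hx

lemma idealGen_subset {X I : Set (Fin n)} (hI : IsPosetIdeal P I) (hXI : X ⊆ I) :
    idealGen P X ⊆ I := fun x hx => hx I ⟨hI, hXI⟩

lemma idealGen_eq_self {I : Set (Fin n)} (hI : IsPosetIdeal P I) : idealGen P I = I :=
  Set.Subset.antisymm (idealGen_subset hI subset_rfl) (subset_idealGen I)

lemma isPosetIdeal_iUnion {ι : Sort*} {K : ι → Set (Fin n)} (h : ∀ i, IsPosetIdeal P (K i)) :
    IsPosetIdeal P (⋃ i, K i) := by
  intro i hi j hji
  obtain ⟨s, ⟨k, rfl⟩, hs⟩ := hi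
  exact Set.mem_iUnion.2 ⟨k, h k i hs j hji⟩

lemma posetWeight_eq (x : Fin n → F) : posetWeight P x = (idealGen P {i | x i ≠ 0}).ncard := rfl

lemma IsPIsometry.weight_eq {T : (Fin n → F) ≃ₗ[F] (Fin n → F)} (hT : IsPIsometry P T)
    (x : Fin n → F) : posetWeight P (T x) = posetWeight P x := by
  have := hT x 0
  simpa [posetDist, map_zero] using this

lemma IsPIsometry.symm {T : (Fin n → F) ≃ₗ[F] (Fin n → F)} (hT : IsPIsometry P T) :
    IsPIsometry P T.symm := by
  intro x y
  have := hT (T.symm x) (T.symm y)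
  simpa using this.symm

lemma IsPIsometry.trans {T S : (Fin n → F) ≃ₗ[F] (Fin n → F)} (hT : IsPIsometry P T)
    (hS : IsPIsometry P S) : IsPIsometry P (T.trans S) := by
  intro x y
  simpa using (hS (T x) (T y)).trans (hT x y)

lemma mem_suppS {D : Submodule F (Fin n → F)} {x : Fin n → F} (hx : x ∈ D) {j : Fin n}
    (hj : x j ≠ 0) : j ∈ suppS D := ⟨x, hx, hj⟩

lemma suppS_mono {D E : Submodule F (Fin n → F)} (h : D ≤ E) : suppS D ⊆ suppS E := by
  rintro j ⟨x, hx, hj⟩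
  exact ⟨x, h hx, hj⟩

lemma eq_zero_of_suppS {D : Submodule F (Fin n → F)} {x : Fin n → F} (hx : x ∈ D)
    {j : Fin n} (hj : j ∉ suppS D) : x j = 0 := by
  by_contra h
  exact hj ⟨x, hx, h⟩

/-- Existence of a componentwise representation for members of a finite supremum. -/
lemma exists_rep {r : ℕ} (D : Fin r → Submodule F (Fin n → F)) {x : Fin n → F}
    (hx : x ∈ ⨆ i, D i) : ∃ a : Fin r → (Fin n → F), (∀ i, a i ∈ D i) ∧ x = ∑ i, a i := by
  rw [Submodule.mem_iSup_iff_exists_finsupp] at hx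
  obtain ⟨f, hf, hsum⟩ := hx
  refine ⟨fun i => f i, hf, ?_⟩
  rw [← hsum, Finsupp.sum_fintype]
  intro i; rfl

lemma suppS_iSup {r : ℕ} (D : Fin r → Submodule F (Fin n → F)) :
    suppS (⨆ i, D i) = ⋃ i, suppS (D i) := by
  apply Set.Subset.antisymm
  · rintro j ⟨x, hx, hj⟩
    obtain ⟨a, ha, rfl⟩ := exists_rep D hx
    have : ∃ i, a i j ≠ 0 := by
      by_contra h
      push_neg at h
      simp [Finset.sum_apply, h] at hj
    obtain ⟨i, hi⟩ := this
    exact Set.mem_iUnion.2 ⟨i, a i, ha i, hi⟩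
  · refine Set.iUnion_subset fun i => suppS_mono (le_iSup D i)


/-- The submodule of vectors vanishing on a set `S`. -/
def zeroOn (F : Type*) [Field F] {n : ℕ} (S : Set (Fin n)) : Submodule F (Fin n → F) where
  carrier := {x | ∀ j ∈ S, x j = 0}
  add_mem' := by
    intro a b ha hb j hj
    simp only [Set.mem_setOf_eq] at ha hb ⊢
    rw [Pi.add_apply, ha j hj, hb j hj, add_zero]
  zero_mem' := by intro j _; rfl
  smul_mem' := by
    intro c a ha j hj
    simp only [Set.mem_setOf_eq] at ha ⊢
    rw [Pi.smul_apply, ha j hj, smul_zero]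

lemma mem_zeroOn {S : Set (Fin n)} {x : Fin n → F} :
    x ∈ zeroOn F S ↔ ∀ j ∈ S, x j = 0 := Iff.rfl

lemma le_zeroOn_of_disjoint {D : Submodule F (Fin n → F)} {S : Set (Fin n)}
    (h : Disjoint (suppS D) S) : D ≤ zeroOn F S := by
  intro x hx j hj
  by_contra hc
  exact h.le_bot ⟨mem_suppS hx hc, hj⟩

lemma inf_zeroOn_suppS (D : Submodule F (Fin n → F)) : D ⊓ zeroOn F (suppS D) = ⊥ := by
  rw [eq_bot_iff]
  rintro x ⟨hxD, hxz⟩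
  have : x = 0 := by
    funext j
    by_cases hj : x j = 0
    · exact hj
    · exact hxz j (mem_suppS hxD hj)
  simp [this]

/-- A family of submodules with pairwise disjoint supports is independent. -/
lemma indep_of_disjoint_supp {r : ℕ} {D : Fin r → Submodule F (Fin n → F)}
    (h : Pairwise fun i j => Disjoint (suppS (D i)) (suppS (D j))) : iSupIndep D := by
  intro i
  have hle : (⨆ j, ⨆ (_ : j ≠ i), D j) ≤ zeroOn F (suppS (D i)) := by
    refine iSup_le fun j => iSup_le fun hj => ?_
    exact le_zeroOn_of_disjoint (h hj)
  refine Disjoint.mono_right hle ?_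
  rw [disjoint_iff, inf_zeroOn_suppS]

end Aux

section Aux2

variable {F : Type*} [Field F] {n : ℕ} {P : PartialOrder (Fin n)}

lemma ncard_biUnion_le {r : ℕ} (K : Fin r → Set (Fin n)) :
    (⋃ i, K i).ncard ≤ ∑ i, (K i).ncard := by
  induction r with
  | zero => simp
  | succ m ih =>
    have he : (⋃ i : Fin (m+1), K i) = K 0 ∪ ⋃ i : Fin m, K i.succ := by
      ext x; simp [Fin.exists_fin_succ]
    rw [he, Fin.sum_univ_succ]
    calc (K 0 ∪ ⋃ i : Fin m, K i.succ).ncard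
        ≤ (K 0).ncard + (⋃ i : Fin m, K i.succ).ncard := Set.ncard_union_le _ _
      _ ≤ (K 0).ncard + ∑ i : Fin m, (K i.succ).ncard := by
          exact Nat.add_le_add_left (ih fun i => K i.succ) _
  
lemma ncard_biUnion_eq {r : ℕ} (K : Fin r → Set (Fin n))
    (hd : Pairwise fun i j => Disjoint (K i) (K j)) :
    (⋃ i, K i).ncard = ∑ i, (K i).ncard := by
  induction r with
  | zero => simp
  | succ m ih =>
    have he : (⋃ i : Fin (m+1), K i) = K 0 ∪ ⋃ i : Fin m, K i.succ := by
      ext x; simp [Fin.exists_fin_succ]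
    rw [he, Fin.sum_univ_succ]
    rw [Set.ncard_union_eq ?hd (Set.toFinite _) (Set.toFinite _)]
    · rw [ih (fun i => K i.succ) (fun i j hij => hd (by simpa using hij))]
    case hd =>
      rw [Set.disjoint_iUnion_right]
      intro i
      exact hd (by simp [Fin.ext_iff])

/-- The single-component decomposition. -/
def Decomposition.single {C : Submodule F (Fin n → F)} (hC : C ≠ ⊥) : Decomposition C where
  r := 1
  D := fun _ => C
  ne_bot := fun _ => hC
  indep := by
    intro i
    suffices hs : (⨆ j : Fin 1, ⨆ (_ : j ≠ i), C) = ⊥ by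
      show Disjoint C (⨆ j : Fin 1, ⨆ (_ : j ≠ i), C)
      rw [hs]
      exact disjoint_bot_right
    refine le_antisymm (iSup_le fun j => iSup_le fun hj => absurd (Subsingleton.elim j i) hj)
      bot_le
  sup_eq := by simp
  disj := by
    intro i j hij
    exact absurd (Subsingleton.elim i j) hij

/-- The empty decomposition of the zero code. -/
def Decomposition.empty : Decomposition (⊥ : Submodule F (Fin n → F)) where
  r := 0
  D := Fin.elim0
  ne_bot := fun i => i.elim0
  indep := fun i => i.elim0
  sup_eq := by simp
  disj := fun i => i.elim0

/-- An irreducible code is nonzero. -/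
lemma PIrreducible.ne_bot {D : Submodule F (Fin n → F)} (h : PIrreducible P D) : D ≠ ⊥ := by
  intro hbot
  let d : PDecomposition P D :=
    { C' := ⊥
      T := LinearEquiv.refl F _
      isom := fun x y => rfl
      image := by simp [hbot]
      dec := Decomposition.empty }
  have h1 := (h d).1
  have h0 : d.dec.r = 0 := rfl
  rw [h0] at h1
  exact zero_ne_one h1

/-- The `r = 1` `P`-decomposition attached to an isometry. -/
noncomputable def PDecomposition.ofIsometry {D : Submodule F (Fin n → F)} (hD : D ≠ ⊥)
    {T : (Fin n → F) ≃ₗ[F] (Fin n → F)} (hT : IsPIsometry P T) : PDecomposition P D where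
  C' := Submodule.map (T : (Fin n → F) →ₗ[F] (Fin n → F)) D
  T := T
  isom := hT
  image := rfl
  dec := Decomposition.single (by
    intro hc
    apply hD
    rw [← Submodule.map_bot (T : (Fin n → F) →ₗ[F] (Fin n → F))] at hc
    exact Submodule.map_injective_of_injective T.injective hc)

/-- Support cardinality is invariant under isometries, for irreducible codes. -/
lemma PIrreducible.ncard_suppS_map {D : Submodule F (Fin n → F)} (h : PIrreducible P D)
    {T : (Fin n → F) ≃ₗ[F] (Fin n → F)} (hT : IsPIsometry P T) :
    (suppS (Submodule.map (T : (Fin n → F) →ₗ[F] (Fin n → F)) D)).ncard = (suppS D).ncard :=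
  (h (PDecomposition.ofIsometry h.ne_bot hT)).2.1

end Aux2

section Aux3

variable {F : Type*} [Field F] {n : ℕ} {P : PartialOrder (Fin n)}

/-- The shear map `x ↦ x + x i • e j`, for `j ≠ i`. -/
noncomputable def shear (F : Type*) [Field F] {n : ℕ} (i j : Fin n) (hij : j ≠ i) :
    (Fin n → F) ≃ₗ[F] (Fin n → F) := by
  refine LinearEquiv.ofLinear
    (LinearMap.id + (LinearMap.proj i).smulRight ((Pi.single j (1 : F) : Fin n → F)))
    (LinearMap.id - (LinearMap.proj i).smulRight ((Pi.single j (1 : F) : Fin n → F))) ?_ ?_ <;>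
  · apply LinearMap.ext
    intro x
    funext m
    have hi : (Pi.single j (1 : F) : Fin n → F) i = 0 := by
      simp [Pi.single_apply, hij.symm]
    simp only [LinearMap.comp_apply, LinearMap.add_apply, LinearMap.sub_apply,
      LinearMap.id_coe, id_eq, LinearMap.smulRight_apply, LinearMap.proj_apply,
      Pi.add_apply, Pi.sub_apply, Pi.smul_apply, smul_eq_mul, hi, LinearMap.id_apply,
      mul_zero, sub_zero, add_zero]
    ring

lemma shear_apply {i j : Fin n} (hij : j ≠ i) (x : Fin n → F) :
    shear F i j hij x = x + x i • (Pi.single j (1 : F) : Fin n → F) := rfl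

lemma shear_apply_of_ne {i j : Fin n} (hij : j ≠ i) (x : Fin n → F) {m : Fin n} (hm : m ≠ j) :
    shear F i j hij x m = x m := by
  simp [shear_apply, Pi.single_apply, hm]

lemma shear_apply_self {i j : Fin n} (hij : j ≠ i) (x : Fin n → F) :
    shear F i j hij x j = x j + x i := by
  simp [shear_apply, Pi.single_apply]

lemma shear_weight {i j : Fin n} (hij : j ≠ i) (hji : P.le j i) (z : Fin n → F) :
    posetWeight P (shear F i j hij z) = posetWeight P z := by
  by_cases hzi : z i = 0
  · have : shear F i j hij z = z := by
      rw [shear_apply, hzi, zero_smul, add_zero]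
    rw [this]
  · unfold posetWeight
    congr 1
    have hiA : i ∈ {m | z m ≠ 0} := hzi
    have hiB : i ∈ {m | shear F i j hij z m ≠ 0} := by
      simpa [shear_apply_of_ne hij z hij.symm] using hzi
    apply Set.Subset.antisymm
    · apply idealGen_subset (isPosetIdeal_idealGen _)
      intro m hm
      by_cases hmj : m = j
      · subst hmj
        exact isPosetIdeal_idealGen _ i (subset_idealGen _ hiA) m hji
      · apply subset_idealGen
        simpa [shear_apply_of_ne hij z hmj] using hm
    · apply idealGen_subset (isPosetIdeal_idealGen _)
      intro m hm
      by_cases hmj : m = j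
      · subst hmj
        exact isPosetIdeal_idealGen _ i (subset_idealGen _ hiB) m hji
      · apply subset_idealGen
        simp only [Set.mem_setOf_eq] at hm ⊢
        rwa [shear_apply_of_ne hij z hmj]

lemma shear_isometry {i j : Fin n} (hij : j ≠ i) (hji : P.le j i) :
    IsPIsometry P (shear F i j hij) := by
  intro x y
  unfold posetDist
  rw [← map_sub]
  exact shear_weight hij hji _

/-- The support of an irreducible code is an ideal of the poset. -/
lemma PIrreducible.isPosetIdeal_suppS {D : Submodule F (Fin n → F)} (h : PIrreducible P D) :
    IsPosetIdeal P (suppS D) := by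
  intro i hi j hji
  by_cases hij : j = i
  · subst hij; exact hi
  by_contra hj
  have hiso := shear_isometry (P := P) (F := F) hij hji
  have hcard := h.ncard_suppS_map hiso
  have hsupp : suppS (Submodule.map ((shear F i j hij : (Fin n → F) ≃ₗ[F] (Fin n → F)) :
      (Fin n → F) →ₗ[F] (Fin n → F)) D) = insert j (suppS D) := by
    apply Set.Subset.antisymm
    · rintro m ⟨y, ⟨x, hx, rfl⟩, hm⟩
      by_cases hmj : m = j
      · subst hmj; exact Set.mem_insert _ _
      · refine Set.mem_insert_iff.2 (Or.inr ?_)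
        refine mem_suppS hx ?_
        rwa [← shear_apply_of_ne hij x hmj]
    · intro m hm
      rcases Set.mem_insert_iff.1 hm with hmj | hmD
      · obtain ⟨x, hx, hxi⟩ := hi
        refine ⟨shear F i j hij x, ⟨x, hx, rfl⟩, ?_⟩
        rw [hmj, shear_apply_self hij x, eq_zero_of_suppS hx hj, zero_add]
        exact hxi
      · have hmj : m ≠ j := fun hc => hj (hc ▸ hmD)
        obtain ⟨x, hx, hxm⟩ := hmD
        refine ⟨shear F i j hij x, ⟨x, hx, rfl⟩, ?_⟩
        rwa [shear_apply_of_ne hij x hmj]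
  rw [hsupp, Set.ncard_insert_of_notMem hj (Set.toFinite _)] at hcard
  omega

end Aux3

section Aux4

variable {F : Type*} [Field F] {n : ℕ} {P : PartialOrder (Fin n)}

/-- **Key counting lemma.** If `U x` is written as a sum of pieces `z j` supported in
pairwise disjoint ideals `T j`, then each pulled-back piece `U.symm (z j)` is supported
inside the ideal generated by the support of `x`. -/
lemma supp_piece_subset {U : (Fin n → F) ≃ₗ[F] (Fin n → F)} (hU : IsPIsometry P U)
    (x : Fin n → F) {s : ℕ} (z : Fin s → (Fin n → F)) (T : Fin s → Set (Fin n))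
    (hT : ∀ j, IsPosetIdeal P (T j)) (hdisj : Pairwise fun j k => Disjoint (T j) (T k))
    (hsupp : ∀ j m, z j m ≠ 0 → m ∈ T j) (hsum : U x = ∑ j, z j) :
    ∀ j m, U.symm (z j) m ≠ 0 → m ∈ idealGen P {m | x m ≠ 0} := by
  classical
  set y : Fin s → (Fin n → F) := fun j => U.symm (z j) with hy
  have hxsum : x = ∑ j, y j := by
    have := congrArg U.symm hsum
    simpa [map_sum] using this
  set I := idealGen P {m | x m ≠ 0} with hI
  set I' := idealGen P {m | U x m ≠ 0} with hI'
  set K : Fin s → Set (Fin n) := fun j => idealGen P {m | z j m ≠ 0} with hK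
  set M : Set (Fin n) := ⋃ j, idealGen P {m | y j m ≠ 0} with hM
  -- supports of z j are contained in supp (U x)
  have hzUx : ∀ j m, z j m ≠ 0 → U x m ≠ 0 := by
    intro j m hm
    have hmT : m ∈ T j := hsupp j m hm
    have : U x m = ∑ k, z k m := by rw [hsum]; simp
    rw [this, Finset.sum_eq_single j]
    · exact hm
    · intro k _ hkj
      by_contra hc
      exact Set.disjoint_left.1 (hdisj hkj) (hsupp k m hc) hmT
    · intro hj; exact absurd (Finset.mem_univ j) hj
  have hKI' : ∀ j, K j ⊆ I' :=
    fun j => idealGen_subset (isPosetIdeal_idealGen _) fun m hm =>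
      subset_idealGen _ (hzUx j m hm)
  have hKT : ∀ j, K j ⊆ T j := fun j => idealGen_subset (hT j) (fun m hm => hsupp j m hm)
  have hKdisj : Pairwise fun j k => Disjoint (K j) (K k) :=
    fun j k hjk => ((hdisj hjk).mono (hKT j) (hKT k))
  have hII' : I.ncard = I'.ncard := (hU.weight_eq x).symm
  have hyK : ∀ j, (idealGen P {m | y j m ≠ 0}).ncard = (K j).ncard := fun j =>
    (hU.symm.weight_eq (z j))
  have hIM : I ⊆ M := by
    refine idealGen_subset (isPosetIdeal_iUnion fun j => isPosetIdeal_idealGen _) ?_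
    intro m hm
    have : ∃ j, y j m ≠ 0 := by
      by_contra hc
      push_neg at hc
      rw [hxsum] at hm
      simp only [Set.mem_setOf_eq, Finset.sum_apply] at hm
      exact hm (Finset.sum_eq_zero fun j _ => hc j)
    obtain ⟨j, hj⟩ := this
    exact Set.mem_iUnion.2 ⟨j, subset_idealGen _ hj⟩
  have hMle : M.ncard ≤ ∑ j, (K j).ncard := by
    calc M.ncard ≤ ∑ j, (idealGen P {m | y j m ≠ 0}).ncard := ncard_biUnion_le _
      _ = ∑ j, (K j).ncard := by simp [hyK]
  have hKle : ∑ j, (K j).ncard ≤ I'.ncard := by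
    rw [← ncard_biUnion_eq K hKdisj]
    exact Set.ncard_le_ncard (Set.iUnion_subset hKI') (Set.toFinite _)
  have hIMcard : I.ncard ≤ M.ncard := Set.ncard_le_ncard hIM (Set.toFinite _)
  have hIeqM : I = M := by
    refine Set.eq_of_subset_of_ncard_le hIM ?_ (Set.toFinite _)
    omega
  intro j m hm
  have : m ∈ idealGen P {m | y j m ≠ 0} := subset_idealGen _ hm
  have : m ∈ M := Set.mem_iUnion.2 ⟨j, this⟩
  rwa [← hIeqM] at this

/-- An element of a disjoint-support sum whose support lies in the support of one
component belongs to that component. -/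
lemma mem_comp_of_supp {r : ℕ} {A : Fin r → Submodule F (Fin n → F)}
    (hAdisj : Pairwise fun i k => Disjoint (suppS (A i)) (suppS (A k)))
    {x : Fin n → F} (hx : x ∈ ⨆ i, A i) {i : Fin r}
    (hsupp : ∀ m, x m ≠ 0 → m ∈ suppS (A i)) : x ∈ A i := by
  obtain ⟨a, ha, rfl⟩ := exists_rep A hx
  have hz : ∀ k, k ≠ i → a k = 0 := by
    intro k hk
    funext m
    by_contra hm
    have hmk : m ∈ suppS (A k) := mem_suppS (ha k) hm
    have hxm : (∑ k', a k') m ≠ 0 := by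
      have hsv : (∑ k', a k') m = ∑ k', a k' m := by simp
      rw [hsv, Finset.sum_eq_single k]
      · exact hm
      · intro k' _ hk'
        by_contra hc
        exact Set.disjoint_left.1 (hAdisj hk') (mem_suppS (ha k') hc) hmk
      · intro hc; exact absurd (Finset.mem_univ k) hc
    exact Set.disjoint_left.1 (hAdisj hk) hmk (hsupp m hxm)
  have hsum : (∑ k, a k) = a i := by
    rw [Finset.sum_eq_single i]
    · intro k _ hk; exact hz k hk
    · intro h; exact absurd (Finset.mem_univ i) h
  rw [hsum]; exact ha i

/-- In an independent family, a sum of members equal to zero has all members zero. -/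
lemma indep_sum_eq_zero {M : Type*} [AddCommGroup M] [Module F M] {s : ℕ}
    {B : Fin s → Submodule F M} (h : iSupIndep B) {b : Fin s → M}
    (hb : ∀ j, b j ∈ B j) (hsum : ∑ j, b j = 0) : ∀ j, b j = 0 := by
  intro j
  have hmem : b j ∈ (⨆ k, ⨆ (_ : k ≠ j), B k) := by
    have hbj0 : b j + ∑ k ∈ Finset.univ.erase j, b k = 0 := by
      rw [Finset.add_sum_erase _ b (Finset.mem_univ j)]
      exact hsum
    rw [eq_neg_of_add_eq_zero_left hbj0]
    refine neg_mem (Submodule.sum_mem _ fun k hk => ?_)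
    have hkj : k ≠ j := (Finset.mem_erase.1 hk).1
    exact Submodule.mem_iSup_of_mem k (Submodule.mem_iSup_of_mem hkj (hb k))
  exact (Submodule.mem_bot F).1 ((h j).le_bot ⟨hb j, hmem⟩)

end Aux4

section Aux5

variable {F : Type*} [Field F] {n : ℕ} {P : PartialOrder (Fin n)}

/-- **Core lemma**: given an isometry between two codes with maximal decompositions,
every pulled-back component of the target is contained in a component of the source. -/
lemma core {U : (Fin n → F) ≃ₗ[F] (Fin n → F)} (hU : IsPIsometry P U)
    {r s : ℕ} {A : Fin r → Submodule F (Fin n → F)} {B : Fin s → Submodule F (Fin n → F)}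
    (hAirr : ∀ i, PIrreducible P (A i)) (hBirr : ∀ j, PIrreducible P (B j))
    (hAdisj : Pairwise fun i k => Disjoint (suppS (A i)) (suppS (A k)))
    (hBdisj : Pairwise fun j k => Disjoint (suppS (B j)) (suppS (B k)))
    (himage : Submodule.map (U : (Fin n → F) →ₗ[F] (Fin n → F)) (⨆ i, A i) = ⨆ j, B j) :
    ∀ j, ∃ i, Submodule.map (U.symm : (Fin n → F) →ₗ[F] (Fin n → F)) (B j) ≤ A i := by
  classical
  set V : Fin s → Submodule F (Fin n → F) :=
    fun j => Submodule.map (U.symm : (Fin n → F) →ₗ[F] (Fin n → F)) (B j) with hV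
  have hmemV : ∀ j (x : Fin n → F), x ∈ V j ↔ U x ∈ B j := by
    intro j x
    rw [hV]
    rw [Submodule.mem_map_equiv]
    rw [LinearEquiv.symm_symm]
  have hVC : ∀ j, V j ≤ ⨆ i, A i := by
    intro j v hv
    rw [hmemV] at hv
    have hbC : (U v : Fin n → F) ∈ Submodule.map (U : (Fin n → F) →ₗ[F] (Fin n → F)) (⨆ i, A i) := by
      rw [himage]
      exact Submodule.mem_iSup_of_mem j hv
    obtain ⟨x, hx, hxe⟩ := hbC
    have : x = v := U.injective hxe
    rwa [← this]
  -- Step A: elements of `A i` decompose along the `V j ⊓ A i`.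
  have stepA : ∀ i, ∀ x ∈ A i, ∃ w : Fin s → (Fin n → F),
      (∀ j, w j ∈ V j ⊓ A i) ∧ x = ∑ j, w j := by
    intro i x hxA
    have hxC : x ∈ ⨆ i, A i := Submodule.mem_iSup_of_mem i hxA
    have hUx : U x ∈ ⨆ j, B j := by
      rw [← himage]; exact ⟨x, hxC, rfl⟩
    obtain ⟨z, hz, hsum⟩ := exists_rep B hUx
    have hkey := supp_piece_subset hU x z (fun j => suppS (B j))
        (fun j => (hBirr j).isPosetIdeal_suppS) hBdisj
        (fun j m hm => mem_suppS (hz j) hm) hsum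
    refine ⟨fun j => U.symm (z j), fun j => ?_, ?_⟩
    · refine ⟨⟨z j, hz j, rfl⟩, ?_⟩
      refine mem_comp_of_supp hAdisj (hVC j ⟨z j, hz j, rfl⟩) ?_
      intro m hm
      have h2 : idealGen P {m | x m ≠ 0} ⊆ suppS (A i) :=
        idealGen_subset (hAirr i).isPosetIdeal_suppS (fun m' hm' => mem_suppS hxA hm')
      exact h2 (hkey j m hm)
    · have := congrArg U.symm hsum
      simpa [map_sum] using this
  -- Step B: elements of `V j` decompose along the `V j ⊓ A i`.
  have stepB : ∀ j, ∀ v ∈ V j, ∃ w : Fin r → (Fin n → F),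
      (∀ i, w i ∈ V j ⊓ A i) ∧ v = ∑ i, w i := by
    intro j v hv
    obtain ⟨a, ha, hva⟩ := exists_rep A (hVC j hv)
    choose w hw hwa using fun i => stepA i (a i) (ha i)
    set c : Fin s → (Fin n → F) := fun j' => ∑ i, w i j' with hcdef
    have hc : ∀ j', c j' ∈ V j' := fun j' => Submodule.sum_mem _ (fun i _ => (hw i j').1)
    have hvc : v = ∑ j', c j' := by
      rw [hva]
      rw [Finset.sum_comm (s := Finset.univ) (t := Finset.univ) (f := fun j' i => w i j')]
      exact Finset.sum_congr rfl fun i _ => hwa i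
    have hBindep : iSupIndep B := indep_of_disjoint_supp hBdisj
    set b : Fin s → (Fin n → F) :=
      fun j' => U (c j') - if j' = j then U v else 0 with hbdef
    have hbmem : ∀ j', b j' ∈ B j' := by
      intro j'
      have h1 : U (c j') ∈ B j' := (hmemV j' (c j')).1 (hc j')
      by_cases h : j' = j
      · subst h
        exact Submodule.sub_mem _ h1 (by simpa using (hmemV j' v).1 hv)
      · simpa [hbdef, h] using h1
    have hbsum : ∑ j', b j' = 0 := by
      rw [hbdef]
      rw [Finset.sum_sub_distrib]
      rw [Finset.sum_ite_eq' Finset.univ j (fun _ => U v)]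
      simp only [Finset.mem_univ, if_true]
      rw [← map_sum, ← hvc, sub_self]
    have hzero := indep_sum_eq_zero hBindep hbmem hbsum
    refine ⟨fun i => w i j, fun i => hw i j, ?_⟩
    have hcj : U (c j) = U v := by
      have := hzero j
      simpa [hbdef] using sub_eq_zero.1 this
    have : c j = v := U.injective hcj
    rw [← this, hcdef]
  intro j
  have hVne : V j ≠ ⊥ := by
    intro hbot
    apply (hBirr j).ne_bot
    have : B j = Submodule.map (U : (Fin n → F) →ₗ[F] (Fin n → F)) (V j) := by
      rw [hV, ← Submodule.map_comp]
      simp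
    rw [this, hbot, Submodule.map_bot]
  set S : Finset (Fin r) := Finset.univ.filter (fun i => V j ⊓ A i ≠ ⊥) with hS
  set e := S.orderIsoOfFin rfl with he
  have hedisj : Pairwise fun k k' : Fin S.card =>
      Disjoint (suppS (V j ⊓ A (e k))) (suppS (V j ⊓ A (e k'))) := by
    intro k k' hkk'
    have hne : (e k : Fin r) ≠ (e k' : Fin r) := by
      intro hc
      exact hkk' (e.injective (Subtype.ext hc))
    exact ((hAdisj hne).mono (suppS_mono inf_le_right) (suppS_mono inf_le_right))
  have hsup : (⨆ k : Fin S.card, (V j ⊓ A (e k))) = V j := by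
    apply le_antisymm (iSup_le fun k => inf_le_left)
    intro v hv
    obtain ⟨w, hw, rfl⟩ := stepB j v hv
    refine Submodule.sum_mem _ fun i _ => ?_
    by_cases hi : V j ⊓ A i = ⊥
    · have : w i ∈ (⊥ : Submodule F (Fin n → F)) := hi ▸ hw i
      simp only [Submodule.mem_bot] at this
      rw [this]; exact Submodule.zero_mem _
    · have hiS : i ∈ S := by rw [hS]; simp [hi]
      have : w i ∈ V j ⊓ A ((e (e.symm ⟨i, hiS⟩) : Fin r)) := by
        rw [OrderIso.apply_symm_apply]
        exact hw i
      exact Submodule.mem_iSup_of_mem (e.symm ⟨i, hiS⟩) this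
  let dec : Decomposition (V j) :=
    { r := S.card
      D := fun k => V j ⊓ A (e k)
      ne_bot := fun k => by
        have hmem := (e k).2
        simp only [hS, Finset.mem_filter] at hmem
        exact hmem.2
      indep := indep_of_disjoint_supp hedisj
      sup_eq := hsup
      disj := hedisj }
  let pd : PDecomposition P (B j) :=
    { C' := V j
      T := U.symm
      isom := hU.symm
      image := rfl
      dec := dec }
  have htriv := hBirr j pd
  have hcard : S.card = 1 := htriv.1
  obtain ⟨i₀, hi₀⟩ := Finset.card_eq_one.1 hcard
  refine ⟨i₀, ?_⟩
  intro v hv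
  obtain ⟨w, hw, rfl⟩ := stepB j v hv
  have hwz : ∀ i, i ≠ i₀ → w i = 0 := by
    intro i hi
    have hiS : i ∉ S := by
      rw [hi₀]
      simp [hi]
    rw [hS, Finset.mem_filter] at hiS
    push_neg at hiS
    have hbot := hiS (Finset.mem_univ i)
    have : w i ∈ (⊥ : Submodule F (Fin n → F)) := hbot ▸ hw i
    simpa using this
  have : (∑ i, w i) = w i₀ := by
    rw [Finset.sum_eq_single i₀]
    · intro k _ hk; exact hwz k hk
    · intro h; exact absurd (Finset.mem_univ i₀) h
  rw [this]
  exact (hw i₀).2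

end Aux5

section Aux6

variable {F : Type*} [Field F] {n : ℕ} {P : PartialOrder (Fin n)}

lemma suppS_coSupp (X : Submodule F (Fin n → F)) : suppS (coSupp X) = (suppS X)ᶜ := by
  apply Set.Subset.antisymm
  · rintro m ⟨x, hx, hm⟩
    intro hmem
    exact hm (hx m hmem)
  · intro m hm
    refine ⟨Pi.single m (1 : F), ?_, by simp⟩
    intro k hk
    have hkm : k ≠ m := fun hc => hm (hc ▸ hk)
    simp [Pi.single_apply, hkm]

lemma coSupp_eq_zeroOn (X : Submodule F (Fin n → F)) : coSupp X = zeroOn F (suppS X) := rfl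

/-- The rank of the space of vectors vanishing on `S`. -/
lemma finrank_zeroOn (S : Set (Fin n)) : Module.finrank F (zeroOn F S) = Sᶜ.ncard := by
  classical
  haveI : Fintype ↥(Sᶜ) := Fintype.ofFinite _
  let eqv : (zeroOn F S) ≃ₗ[F] (↥(Sᶜ) → F) :=
    { toFun := fun x j => x.1 j.1
      map_add' := fun a b => rfl
      map_smul' := fun c a => rfl
      invFun := fun g => ⟨fun m => if h : m ∈ S then 0 else g ⟨m, h⟩, by
        intro k hk
        simp [hk]⟩
      left_inv := by
        intro x
        apply Subtype.ext
        funext m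
        by_cases h : m ∈ S
        · simp only [dif_pos h]
          exact (x.2 m h).symm
        · simp only [dif_neg h]
      right_inv := by
        intro g
        funext j
        have : (j : Fin n) ∉ S := j.2
        simp only [dif_neg this] }
  rw [LinearEquiv.finrank_eq eqv, Module.finrank_pi]
  rw [← Nat.card_coe_set_eq, Nat.card_eq_fintype_card]

lemma ncard_compl_eq {S₁ S₂ : Set (Fin n)} (h : S₁.ncard = S₂.ncard) :
    S₁ᶜ.ncard = S₂ᶜ.ncard := by
  have h1 := Set.ncard_add_ncard_compl S₁ (Set.toFinite _) (Set.toFinite _)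
  have h2 := Set.ncard_add_ncard_compl S₂ (Set.toFinite _) (Set.toFinite _)
  omega

end Aux6

/-- **Theorem 1.** Two maximal `P`-decompositions of an `[n,k]_q` code
`C` have the same number of components and, up to a permutation, the same profile:
the `(n_i, k_i)` pairs coincide, as does the pair `(n_0, k_0)` for the
distinguished parts. -/
theorem profile_unique {F : Type*} [Field F] [Fintype F] {n : ℕ}
    (P : PartialOrder (Fin n)) (C : Submodule F (Fin n → F))
    (d' d'' : PDecomposition P C) (h' : d'.IsMaximal) (h'' : d''.IsMaximal) :
    d'.dec.r = d''.dec.r ∧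
    ((suppS (coSupp d'.C')).ncard = (suppS (coSupp d''.C')).ncard ∧
      Module.finrank F (coSupp d'.C') = Module.finrank F (coSupp d''.C')) ∧
    ∃ σ : Fin d'.dec.r ≃ Fin d''.dec.r, ∀ i,
      (suppS (d'.dec.D i)).ncard = (suppS (d''.dec.D (σ i))).ncard ∧
      Module.finrank F (d'.dec.D i) = Module.finrank F (d''.dec.D (σ i)) := by
  classical
  set A := d'.dec.D with hA
  set B := d''.dec.D with hB
  set U : (Fin n → F) ≃ₗ[F] (Fin n → F) := d'.T.symm.trans d''.T with hU
  have hUiso : IsPIsometry P U := IsPIsometry.trans (d'.isom.symm) d''.isom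
  have hCs : Submodule.map (d'.T.symm : (Fin n → F) →ₗ[F] (Fin n → F)) d'.C' = C := by
    rw [← d'.image, ← Submodule.map_comp]
    simp
  have himage : Submodule.map (U : (Fin n → F) →ₗ[F] (Fin n → F)) (⨆ i, A i) = ⨆ j, B j := by
    rw [hA, hB, d'.dec.sup_eq, d''.dec.sup_eq, ← d''.image, hU]
    rw [LinearEquiv.coe_trans, Submodule.map_comp, hCs]
  have himage' : Submodule.map (U.symm : (Fin n → F) →ₗ[F] (Fin n → F)) (⨆ j, B j)
      = ⨆ i, A i := by
    rw [← himage, ← Submodule.map_comp]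
    simp
  have hAirr : ∀ i, PIrreducible P (A i) := h'
  have hBirr : ∀ j, PIrreducible P (B j) := h''
  have hAdisj := d'.dec.disj
  have hBdisj := d''.dec.disj
  choose τ hτ using core hUiso hAirr hBirr hAdisj hBdisj himage
  choose ρ hρ' using core hUiso.symm hBirr hAirr hBdisj hAdisj himage'
  have hρ : ∀ i, Submodule.map (U : (Fin n → F) →ₗ[F] (Fin n → F)) (A i) ≤ B (ρ i) := by
    intro i
    have := hρ' i
    rwa [LinearEquiv.symm_symm] at this
  have hAle : ∀ i, A i ≤ Submodule.map (U.symm : (Fin n → F) →ₗ[F] (Fin n → F)) (B (ρ i)) := by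
    intro i
    have h1 : A i = Submodule.map (U.symm : (Fin n → F) →ₗ[F] (Fin n → F))
        (Submodule.map (U : (Fin n → F) →ₗ[F] (Fin n → F)) (A i)) := by
      rw [← Submodule.map_comp]
      simp
    rw [h1]
    exact Submodule.map_mono (hρ i)
  have hBle : ∀ j, B j ≤ Submodule.map (U : (Fin n → F) →ₗ[F] (Fin n → F)) (A (τ j)) := by
    intro j
    have h1 : B j = Submodule.map (U : (Fin n → F) →ₗ[F] (Fin n → F))
        (Submodule.map (U.symm : (Fin n → F) →ₗ[F] (Fin n → F)) (B j)) := by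
      rw [← Submodule.map_comp]
      simp
    rw [h1]
    exact Submodule.map_mono (hτ j)
  have hτρ : ∀ i, τ (ρ i) = i := by
    intro i
    by_contra hne
    have hle : A i ≤ A (τ (ρ i)) := le_trans (hAle i) (hτ (ρ i))
    have hdis : Disjoint (A i) (A (τ (ρ i))) :=
      d'.dec.indep.pairwiseDisjoint (Ne.symm hne)
    exact d'.dec.ne_bot i (hdis.eq_bot_of_le hle)
  have hρτ : ∀ j, ρ (τ j) = j := by
    intro j
    by_contra hne
    have hle : B j ≤ B (ρ (τ j)) := le_trans (hBle j) (hρ (τ j))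
    have hdis : Disjoint (B j) (B (ρ (τ j))) :=
      d''.dec.indep.pairwiseDisjoint (Ne.symm hne)
    exact d''.dec.ne_bot j (hdis.eq_bot_of_le hle)
  have hmapeq : ∀ i, Submodule.map (U : (Fin n → F) →ₗ[F] (Fin n → F)) (A i) = B (ρ i) := by
    intro i
    refine le_antisymm (hρ i) ?_
    have := hBle (ρ i)
    rwa [hτρ i] at this
  let σ : Fin d'.dec.r ≃ Fin d''.dec.r := ⟨ρ, τ, hτρ, hρτ⟩
  have hstat : ∀ i, (suppS (A i)).ncard = (suppS (B (σ i))).ncard ∧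
      Module.finrank F (A i) = Module.finrank F (B (σ i)) := by
    intro i
    have h1 : B (σ i) = Submodule.map (U : (Fin n → F) →ₗ[F] (Fin n → F)) (A i) :=
      (hmapeq i).symm
    constructor
    · rw [h1]
      exact ((h' i).ncard_suppS_map hUiso).symm
    · rw [h1]
      exact (LinearEquiv.finrank_map_eq U (A i)).symm
  have hsupp1 : suppS d'.C' = ⋃ i, suppS (A i) := by
    have h0 := suppS_iSup (d'.dec.D)
    rw [d'.dec.sup_eq] at h0
    exact h0
  have hsupp2 : suppS d''.C' = ⋃ j, suppS (B j) := by
    have h0 := suppS_iSup (d''.dec.D)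
    rw [d''.dec.sup_eq] at h0
    exact h0
  have htot : (suppS d'.C').ncard = (suppS d''.C').ncard := by
    rw [hsupp1, hsupp2, ncard_biUnion_eq _ hAdisj, ncard_biUnion_eq _ hBdisj]
    exact Fintype.sum_equiv σ _ _ (fun i => (hstat i).1)
  refine ⟨?_, ⟨?_, ?_⟩, σ, hstat⟩
  · have := Fintype.card_congr σ
    simpa using this
  · rw [suppS_coSupp, suppS_coSupp]
    exact ncard_compl_eq htot
  · rw [coSupp_eq_zeroOn, coSupp_eq_zeroOn, finrank_zeroOn, finrank_zeroOn]
    exact ncard_compl_eq htot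
end

section
/- Let P and Q be posets on [n] with P ≤ Q (i.e., i ⪯_P j implies i ⪯_Q j). Then for every linear code C ⊆ F_q^n there exists a primary P-decomposition of C which is also a Q-decomposition of C. -/
/-- The complexity of a `P`-decomposition: `Σ_{i=1}^r q^{n_i - k_i}` where
`n_i = |supp(C'_i)|` and `k_i = dim C'_i`. -/
noncomputable def PDecomposition.complexity {F : Type*} [Field F] [Fintype F] {n : ℕ}
    {P : PartialOrder (Fin n)} {C : Submodule F (Fin n → F)}
    (d : PDecomposition P C) : ℕ :=
  ∑ i, (Fintype.card F) ^ ((suppS (d.dec.D i)).ncard - Module.finrank F (d.dec.D i))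

/-- A `P`-decomposition of `C` is primary if its complexity is minimal among all
`P`-decompositions of `C`. -/
def PDecomposition.IsPrimary {F : Type*} [Field F] [Fintype F] {n : ℕ}
    {P : PartialOrder (Fin n)} {C : Submodule F (Fin n → F)}
    (d : PDecomposition P C) : Prop :=
  ∀ d' : PDecomposition P C, d.complexity ≤ d'.complexity

/-- `O_P(C)`: the minimal complexity among all `P`-decompositions of `C`. -/
noncomputable def minComplexity {F : Type*} [Field F] [Fintype F] {n : ℕ}
    (P : PartialOrder (Fin n)) (C : Submodule F (Fin n → F)) : ℕ :=
  sInf {m | ∃ d : PDecomposition P C, d.complexity = m}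

/- ===================== Auxiliary development ===================== -/

open Set

namespace PQAux

variable {F : Type*} [Field F] {n : ℕ}

/-- support of a vector -/
def vsupp (x : Fin n → F) : Set (Fin n) := {i | x i ≠ 0}

lemma mem_vsupp {x : Fin n → F} {i : Fin n} : i ∈ vsupp x ↔ x i ≠ 0 := Iff.rfl

lemma posetWeight_def (P : PartialOrder (Fin n)) (x : Fin n → F) :
    posetWeight P x = (idealGen P (vsupp x)).ncard := rfl

variable {P : PartialOrder (Fin n)}

lemma mem_idealGen {X : Set (Fin n)} {j : Fin n} :
    j ∈ idealGen P X ↔ ∃ i ∈ X, P.le j i := by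
  constructor
  · intro h
    refine Set.mem_sInter.mp h {k | ∃ i ∈ X, P.le k i} ⟨?_, ?_⟩
    · rintro a ⟨i, hi, hai⟩ b hba
      exact ⟨i, hi, P.le_trans _ _ _ hba hai⟩
    · exact fun i hi => ⟨i, hi, P.le_refl i⟩
  · rintro ⟨i, hiX, hji⟩
    refine Set.mem_sInter.mpr ?_
    rintro I ⟨hI, hXI⟩
    exact hI i (hXI hiX) j hji

lemma subset_idealGen {X : Set (Fin n)} : X ⊆ idealGen P X :=
  fun i hi => mem_idealGen.mpr ⟨i, hi, P.le_refl i⟩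

lemma idealGen_isIdeal (X : Set (Fin n)) : IsPosetIdeal P (idealGen P X) := by
  intro i hi j hji
  obtain ⟨k, hk, hik⟩ := mem_idealGen.mp hi
  exact mem_idealGen.mpr ⟨k, hk, P.le_trans _ _ _ hji hik⟩

lemma idealGen_subset {X I : Set (Fin n)} (hI : IsPosetIdeal P I) (hXI : X ⊆ I) :
    idealGen P X ⊆ I := fun j hj => by
  obtain ⟨i, hi, hji⟩ := mem_idealGen.mp hj
  exact hI i (hXI hi) j hji

lemma idealGen_mono {X Y : Set (Fin n)} (h : X ⊆ Y) : idealGen P X ⊆ idealGen P Y :=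
  idealGen_subset (idealGen_isIdeal Y) (h.trans subset_idealGen)

lemma idealGen_of_isIdeal {I : Set (Fin n)} (hI : IsPosetIdeal P I) : idealGen P I = I :=
  subset_antisymm (idealGen_subset hI subset_rfl) subset_idealGen

lemma idealUnion {I J : Set (Fin n)} (hI : IsPosetIdeal P I) (hJ : IsPosetIdeal P J) :
    IsPosetIdeal P (I ∪ J) := by
  rintro i (hi | hi) j hji
  · exact Or.inl (hI i hi j hji)
  · exact Or.inr (hJ i hi j hji)

lemma idealInter {I J : Set (Fin n)} (hI : IsPosetIdeal P I) (hJ : IsPosetIdeal P J) :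
    IsPosetIdeal P (I ∩ J) := by
  rintro i ⟨hi1, hi2⟩ j hji
  exact ⟨hI i hi1 j hji, hJ i hi2 j hji⟩

/-! ### Coordinate subspaces -/

variable (F) in
/-- The coordinate subspace of vectors supported in `A`. -/
def coordSub (A : Set (Fin n)) : Submodule F (Fin n → F) where
  carrier := {x | ∀ j ∉ A, x j = 0}
  add_mem' := by
    intro a b ha hb j hj
    rw [Pi.add_apply, ha j hj, hb j hj, add_zero]
  zero_mem' := by intro j _; rfl
  smul_mem' := by
    intro c a ha j hj
    rw [Pi.smul_apply, ha j hj, smul_zero]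

lemma mem_coordSub {A : Set (Fin n)} {x : Fin n → F} :
    x ∈ coordSub F A ↔ ∀ j ∉ A, x j = 0 := Iff.rfl

lemma mem_coordSub_vsupp {A : Set (Fin n)} {x : Fin n → F} :
    x ∈ coordSub F A ↔ vsupp x ⊆ A := by
  constructor
  · intro h j hj
    by_contra hjA
    exact hj (h j hjA)
  · intro h j hj
    by_contra hx
    exact hj (h hx)

lemma coordSub_mono {A B : Set (Fin n)} (h : A ⊆ B) : coordSub F A ≤ coordSub F B := by
  intro x hx
  rw [mem_coordSub_vsupp] at hx ⊢
  exact hx.trans h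

lemma single_mem_coordSub {A : Set (Fin n)} {m : Fin n} (hm : m ∈ A) (c : F) :
    (Pi.single m c : Fin n → F) ∈ coordSub F A := by
  intro j hj
  have h : j ≠ m := fun h => hj (h ▸ hm)
  exact Pi.single_eq_of_ne (M := fun _ => F) h c

lemma coordSub_empty : coordSub F (∅ : Set (Fin n)) = ⊥ := by
  ext x
  rw [mem_coordSub, Submodule.mem_bot]
  constructor
  · intro h; funext j; exact h j (by simp)
  · intro h j _; rw [h]; rfl

lemma coordSub_inter (A B : Set (Fin n)) :
    coordSub F (A ∩ B) = coordSub F A ⊓ coordSub F B := by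
  ext x
  simp only [Submodule.mem_inf, mem_coordSub]
  constructor
  · intro h
    exact ⟨fun j hj => h j (fun hh => hj hh.1), fun j hj => h j (fun hh => hj hh.2)⟩
  · rintro ⟨h1, h2⟩ j hj
    by_cases hA : j ∈ A
    · exact h2 j (fun hB => hj ⟨hA, hB⟩)
    · exact h1 j hA

lemma coordSub_union (A B : Set (Fin n)) :
    coordSub F (A ∪ B) = coordSub F A ⊔ coordSub F B := by
  classical
  apply le_antisymm
  · intro x hx
    set y : Fin n → F := fun j => if j ∈ A then x j else 0 with hy
    have hyA : y ∈ coordSub F A := by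
      intro j hj; simp [hy, hj]
    have hzB : x - y ∈ coordSub F B := by
      intro j hj
      by_cases hA : j ∈ A
      · simp [hy, hA]
      · have : x j = 0 := hx j (by simp [hA, hj])
        simp [hy, hA, this]
    have : y + (x - y) = x := by abel
    exact this ▸ Submodule.add_mem_sup hyA hzB
  · apply sup_le
    · exact coordSub_mono Set.subset_union_left
    · exact coordSub_mono Set.subset_union_right

lemma coordSub_injective {A B : Set (Fin n)} (h : coordSub F A = coordSub F B) : A = B := by
  ext a
  constructor
  · intro ha
    by_contra hb
    have := h ▸ single_mem_coordSub (F := F) ha 1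
    have h0 := this a hb
    rw [Pi.single_eq_same] at h0
    exact one_ne_zero h0
  · intro hb
    by_contra ha
    have := h.symm ▸ single_mem_coordSub (F := F) hb 1
    have h0 := this a ha
    rw [Pi.single_eq_same] at h0
    exact one_ne_zero h0

lemma suppS_coordSub (A : Set (Fin n)) : suppS (coordSub F A) = A := by
  ext j
  constructor
  · rintro ⟨x, hx, hj⟩
    by_contra hjA
    exact hj (hx j hjA)
  · intro hj
    exact ⟨Pi.single j 1, single_mem_coordSub hj 1, by rw [Pi.single_eq_same]; exact one_ne_zero⟩

/-- `coordSub A` is linearly equivalent to `A → F`. -/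
noncomputable def coordSubEquiv (A : Set (Fin n)) :
    (coordSub F A) ≃ₗ[F] (A → F) := by
  classical
  exact
  { toFun := fun x a => x.1 a
    map_add' := fun x y => rfl
    map_smul' := fun c x => rfl
    invFun := fun g => ⟨fun j => if h : j ∈ A then g ⟨j, h⟩ else 0, fun j hj => dif_neg hj⟩
    left_inv := fun x => by
      apply Subtype.ext
      funext j
      by_cases h : j ∈ A
      · simp [h]
      · simp [h, x.2 j h]
    right_inv := fun g => by
      funext a
      simp [a.2] }

lemma finrank_coordSub (A : Set (Fin n)) :
    Module.finrank F (coordSub F A) = A.ncard := by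
  classical
  haveI : Fintype A := (A.toFinite).fintype
  rw [LinearEquiv.finrank_eq (coordSubEquiv A), Module.finrank_pi,
    Set.ncard_eq_toFinset_card', Set.toFinset_card]

lemma suppS_mono {D D' : Submodule F (Fin n → F)} (h : D ≤ D') : suppS D ⊆ suppS D' := by
  rintro j ⟨x, hx, hj⟩
  exact ⟨x, h hx, hj⟩

/-! ### vectors and singles -/

lemma vsupp_single (m : Fin n) : vsupp (Pi.single m (1 : F)) = {m} := by
  ext j
  simp only [mem_vsupp, Set.mem_singleton_iff]
  constructor
  · intro h
    by_contra hj
    exact h (Pi.single_eq_of_ne hj 1)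
  · rintro rfl
    rw [Pi.single_eq_same]
    exact one_ne_zero

lemma single_eq_smul (m : Fin n) (c : F) : Pi.single m c = c • (Pi.single m (1 : F) : Fin n → F) := by
  funext j
  by_cases h : j = m
  · subst h; simp
  · simp [Pi.single_eq_of_ne h]

/-! ### Triangular maps -/

variable (P) in
/-- `L` is `P`-triangular: the support of `L x` lies in the ideal generated by `supp x`. -/
def Tri (L : (Fin n → F) ≃ₗ[F] (Fin n → F)) : Prop :=
  ∀ x j, L x j ≠ 0 → j ∈ idealGen P (vsupp x)

lemma apply_eq_sum (L : (Fin n → F) ≃ₗ[F] (Fin n → F)) (x : Fin n → F) :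
    L x = ∑ i, x i • L (Pi.single i 1) := by
  classical
  conv_lhs => rw [← Finset.univ_sum_single x]
  rw [map_sum]
  refine Finset.sum_congr rfl (fun i _ => ?_)
  rw [single_eq_smul, map_smul]

lemma tri_of_cols {L : (Fin n → F) ≃ₗ[F] (Fin n → F)}
    (h : ∀ i j, L (Pi.single i 1) j ≠ 0 → P.le j i) : Tri P L := by
  intro x j hj
  rw [apply_eq_sum, Finset.sum_apply] at hj
  obtain ⟨i, _, hi⟩ := Finset.exists_ne_zero_of_sum_ne_zero hj
  have hxi : x i ≠ 0 := fun h0 => hi (by simp [h0])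
  have hLi : L (Pi.single i 1) j ≠ 0 := fun h0 => hi (by simp [h0])
  exact mem_idealGen.mpr ⟨i, hxi, h i j hLi⟩

lemma Tri.map_le {L : (Fin n → F) ≃ₗ[F] (Fin n → F)} (hL : Tri P L) {I : Set (Fin n)}
    (hI : IsPosetIdeal P I) :
    Submodule.map (L : (Fin n → F) →ₗ[F] (Fin n → F)) (coordSub F I) ≤ coordSub F I := by
  rintro y ⟨x, hx, rfl⟩
  rw [mem_coordSub_vsupp]
  intro j hj
  have := hL x j hj
  exact idealGen_subset hI (mem_coordSub_vsupp.mp hx) this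

lemma Tri.map_eq {L : (Fin n → F) ≃ₗ[F] (Fin n → F)} (hL : Tri P L) {I : Set (Fin n)}
    (hI : IsPosetIdeal P I) :
    Submodule.map (L : (Fin n → F) →ₗ[F] (Fin n → F)) (coordSub F I) = coordSub F I :=
  Submodule.eq_of_le_of_finrank_le (hL.map_le hI)
    (le_of_eq (LinearEquiv.finrank_map_eq L (coordSub F I)).symm)

lemma Tri.symm {L : (Fin n → F) ≃ₗ[F] (Fin n → F)} (hL : Tri P L) : Tri P L.symm := by
  intro y j hj
  have hI : IsPosetIdeal P (idealGen P (vsupp y)) := idealGen_isIdeal _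
  have hmem : y ∈ coordSub F (idealGen P (vsupp y)) :=
    mem_coordSub_vsupp.mpr subset_idealGen
  rw [← hL.map_eq hI] at hmem
  obtain ⟨x, hx, hxy⟩ := hmem
  have hsymm : L.symm y = x := by
    rw [← hxy]
    simp
  rw [hsymm] at hj
  exact mem_coordSub_vsupp.mp hx hj

lemma Tri.idealGen_eq {R : PartialOrder (Fin n)} (hPR : ∀ i j : Fin n, P.le i j → R.le i j)
    {L : (Fin n → F) ≃ₗ[F] (Fin n → F)} (hL : Tri P L) (x : Fin n → F) :
    idealGen R (vsupp (L x)) = idealGen R (vsupp x) := by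
  have key : ∀ (M : (Fin n → F) ≃ₗ[F] (Fin n → F)), Tri P M → ∀ z,
      idealGen R (vsupp (M z)) ⊆ idealGen R (vsupp z) := by
    intro M hM z
    apply idealGen_subset (idealGen_isIdeal (P := R) _)
    intro j hj
    obtain ⟨i, hi, hji⟩ := mem_idealGen.mp (hM z j hj)
    exact mem_idealGen.mpr ⟨i, hi, hPR j i hji⟩
  apply subset_antisymm (key L hL x)
  have h2 := key L.symm hL.symm (L x)
  rw [L.symm_apply_apply] at h2
  exact h2

lemma Tri.isPIsometry {R : PartialOrder (Fin n)} (hPR : ∀ i j : Fin n, P.le i j → R.le i j)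
    {L : (Fin n → F) ≃ₗ[F] (Fin n → F)} (hL : Tri P L) : IsPIsometry R L := by
  intro x y
  show posetWeight R (L x - L y) = posetWeight R (x - y)
  rw [← map_sub, posetWeight_def, posetWeight_def, hL.idealGen_eq hPR]

/-! ### Isometries -/

lemma weight_eq_of_isometry {T : (Fin n → F) ≃ₗ[F] (Fin n → F)} (hT : IsPIsometry P T)
    (x : Fin n → F) : posetWeight P (T x) = posetWeight P x := by
  have h := hT x 0
  simp only [map_zero] at h
  simpa [posetDist, sub_zero] using h

end PQAux

namespace PQAux

variable {F : Type*} [Field F] {n : ℕ} {P : PartialOrder (Fin n)}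

variable (P) in
/-- The image ideal of `A` under `T`. -/
def FF (T : (Fin n → F) ≃ₗ[F] (Fin n → F)) (A : Set (Fin n)) : Set (Fin n) :=
  idealGen P (suppS (Submodule.map (T : (Fin n → F) →ₗ[F] (Fin n → F)) (coordSub F A)))

lemma FF_def (T : (Fin n → F) ≃ₗ[F] (Fin n → F)) (A : Set (Fin n)) :
    FF P T A =
      idealGen P (suppS (Submodule.map (T : (Fin n → F) →ₗ[F] (Fin n → F)) (coordSub F A))) :=
  rfl

lemma FF_isIdeal (T : (Fin n → F) ≃ₗ[F] (Fin n → F)) (A : Set (Fin n)) :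
    IsPosetIdeal P (FF P T A) := idealGen_isIdeal _

lemma FF_mono (T : (Fin n → F) ≃ₗ[F] (Fin n → F)) {A B : Set (Fin n)} (h : A ⊆ B) :
    FF P T A ⊆ FF P T B :=
  idealGen_mono (suppS_mono (Submodule.map_mono (coordSub_mono h)))

lemma map_le_FF (T : (Fin n → F) ≃ₗ[F] (Fin n → F)) (A : Set (Fin n)) :
    Submodule.map (T : (Fin n → F) →ₗ[F] (Fin n → F)) (coordSub F A) ≤ coordSub F (FF P T A) := by
  intro y hy
  rw [mem_coordSub_vsupp]
  intro j hj
  exact subset_idealGen ⟨y, hy, hj⟩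

lemma exists_maximal (P : PartialOrder (Fin n)) {I : Set (Fin n)} (hne : I.Nonempty) :
    ∃ m ∈ I, ∀ j ∈ I, P.le m j → j = m := by
  obtain ⟨m, hmI, hmax⟩ := Set.Finite.exists_maximalFor
    (fun j => (idealGen P {j}).ncard) I (I.toFinite) hne
  refine ⟨m, hmI, fun j hj hmj => ?_⟩
  have hsub : idealGen P {m} ⊆ idealGen P {j} :=
    idealGen_subset (idealGen_isIdeal _)
      (by rintro k rfl; exact mem_idealGen.mpr ⟨j, rfl, hmj⟩)
  have hle : (idealGen P {m}).ncard ≤ (idealGen P {j}).ncard :=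
    Set.ncard_le_ncard hsub (Set.toFinite _)
  have heq := hmax hj hle
  have hsets : idealGen P {m} = idealGen P {j} :=
    Set.eq_of_subset_of_ncard_le hsub heq (Set.toFinite _)
  have hjm : j ∈ idealGen P {m} := hsets ▸ subset_idealGen rfl
  obtain ⟨i, hi, hji⟩ := mem_idealGen.mp hjm
  rcases hi with rfl
  exact P.le_antisymm _ _ hji hmj

theorem FF_main {T : (Fin n → F) ≃ₗ[F] (Fin n → F)} (hT : IsPIsometry P T) :
    ∀ s : ℕ, ∀ I : Set (Fin n), IsPosetIdeal P I → I.ncard = s →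
      (FF P T I).ncard = s ∧
        Submodule.map (T : (Fin n → F) →ₗ[F] (Fin n → F)) (coordSub F I) = coordSub F (FF P T I) := by
  intro s
  induction s using Nat.strong_induction_on with
  | _ s IH =>
  intro I hI hs
  rcases I.eq_empty_or_nonempty with hIe | hIne
  · -- empty case
    subst hIe
    have h0 : s = 0 := by simpa using hs.symm
    have hFF : FF P T (∅ : Set (Fin n)) = ∅ := by
      rw [FF_def, coordSub_empty, Submodule.map_bot]
      have h1 : suppS (⊥ : Submodule F (Fin n → F)) = ∅ := by
        ext j
        simp only [suppS, Submodule.mem_bot, Set.mem_setOf_eq, Set.mem_empty_iff_false,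
          iff_false, not_exists]
        rintro x ⟨rfl, hx⟩
        exact hx rfl
      rw [h1]
      ext j
      rw [mem_idealGen]
      simp
    constructor
    · rw [hFF, h0]; simp
    · rw [hFF, coordSub_empty, Submodule.map_bot]
  · -- nonempty case
    obtain ⟨m, hmI, hmax⟩ := exists_maximal P hIne
    have hs1 : 1 ≤ s := by
      rw [← hs]
      exact (Set.ncard_pos (Set.toFinite I)).mpr hIne
    set I' := I \ {m} with hI'def
    have hI' : IsPosetIdeal P I' := by
      rintro i ⟨hiI, him⟩ j hji
      refine ⟨hI i hiI j hji, ?_⟩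
      intro hjm
      rw [Set.mem_singleton_iff] at hjm
      subst hjm
      exact him (Set.mem_singleton_iff.mpr (hmax i hiI hji))
    have hI'card : I'.ncard = s - 1 := by
      rw [hI'def, Set.ncard_diff_singleton_of_mem hmI, hs]
    set Im := idealGen P {m} with hImdef
    have hImideal : IsPosetIdeal P Im := idealGen_isIdeal _
    have hImI : Im ⊆ I := idealGen_subset hI (by simpa using hmI)
    by_cases hImeq : Im = I
    · -- principal case
      obtain ⟨hJcard, hJeq⟩ := IH (s - 1) (by omega) I' hI' hI'card
      set J := FF P T I' with hJdef
      have hJideal : IsPosetIdeal P J := FF_isIdeal T I'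
      set em : Fin n → F := Pi.single m 1 with hemdef
      have hemI : em ∈ coordSub F I := single_mem_coordSub hmI 1
      set U := idealGen P (vsupp (T em)) with hUdef
      have hUideal : IsPosetIdeal P U := idealGen_isIdeal _
      have hUcard : U.ncard = s := by
        have h1 := weight_eq_of_isometry hT em
        rw [posetWeight_def, posetWeight_def, hemdef, vsupp_single] at h1
        rw [hUdef, hemdef, h1, ← hImdef, hImeq, hs]
      have key : ∀ u1 ∈ U \ J, ∀ u2 ∈ U \ J, u1 = u2 := by
        rintro u1 ⟨hu1U, hu1J⟩ u2 ⟨hu2U, hu2J⟩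
        by_contra hne
        obtain ⟨t1, ht1s, ht1⟩ := mem_idealGen.mp hu1U
        obtain ⟨t2, ht2s, ht2⟩ := mem_idealGen.mp hu2U
        have ht1J : t1 ∉ J := fun h => hu1J (hJideal t1 h u1 ht1)
        have ht2J : t2 ∉ J := fun h => hu2J (hJideal t2 h u2 ht2)
        classical
        set y : Fin n → F := fun l => if l ∈ J then 1 else T em l with hydef
        have hyd : y - T em ∈ coordSub F J := by
          intro j hj
          simp [hydef, hj]
        rw [← hJeq] at hyd
        obtain ⟨z, hz, hzy⟩ := hyd
        set x : Fin n → F := em + z with hxdef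
        have hTx : T x = y := by
          have hzy' : T z = y - T em := hzy
          rw [hxdef, map_add, hzy']
          abel
        have hxI : x ∈ coordSub F I :=
          Submodule.add_mem _ hemI (coordSub_mono Set.diff_subset hz)
        have hzm : z m = 0 := hz m (by simp [hI'def])
        have hxm : x m = 1 := by
          rw [hxdef, Pi.add_apply, hzm, hemdef, Pi.single_eq_same, add_zero]
        have hwx : posetWeight P x = s := by
          rw [posetWeight_def]
          have hsub1 : idealGen P (vsupp x) ⊆ I :=
            idealGen_subset hI (mem_coordSub_vsupp.mp hxI)
          have hsub2 : I ⊆ idealGen P (vsupp x) := by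
            rw [← hImeq, hImdef]
            exact idealGen_mono (by
              rintro k rfl
              rw [mem_vsupp, hxm]
              exact one_ne_zero)
          rw [subset_antisymm hsub1 hsub2, hs]
        have hwy : posetWeight P y = s := by
          rw [← hTx, weight_eq_of_isometry hT, hwx]
        have hsub : insert u1 (insert u2 J) ⊆ idealGen P (vsupp y) := by
          intro k hk
          rcases Set.mem_insert_iff.mp hk with rfl | hk
          · refine mem_idealGen.mpr ⟨t1, ?_, ht1⟩
            rw [mem_vsupp, hydef]
            simp only [ht1J, if_false]
            exact ht1s
          rcases Set.mem_insert_iff.mp hk with rfl | hk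
          · refine mem_idealGen.mpr ⟨t2, ?_, ht2⟩
            rw [mem_vsupp, hydef]
            simp only [ht2J, if_false]
            exact ht2s
          · apply subset_idealGen
            rw [mem_vsupp, hydef]
            simp only [hk, if_true]
            exact one_ne_zero
        have hcard1 : (insert u2 J).ncard = s := by
          rw [Set.ncard_insert_of_notMem hu2J (Set.toFinite _), hJcard]
          omega
        have hu1ni : u1 ∉ insert u2 J := by
          intro h
          rcases Set.mem_insert_iff.mp h with rfl | h
          · exact hne rfl
          · exact hu1J h
        have hcard2 : (insert u1 (insert u2 J)).ncard = s + 1 := by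
          rw [Set.ncard_insert_of_notMem hu1ni (Set.toFinite _), hcard1]
        have hle : s + 1 ≤ (idealGen P (vsupp y)).ncard := by
          rw [← hcard2]
          exact Set.ncard_le_ncard hsub (Set.toFinite _)
        rw [posetWeight_def] at hwy
        omega
      have hUJne : (U \ J).Nonempty := by
        rw [Set.diff_nonempty]
        intro hsub
        have := Set.ncard_le_ncard hsub (Set.toFinite _)
        rw [hUcard, hJcard] at this
        omega
      obtain ⟨u0, hu0⟩ := hUJne
      have hUJsingle : U \ J = {u0} := by
        apply subset_antisymm
        · intro u hu
          exact Set.mem_singleton_iff.mpr (key u hu u0 hu0)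
        · rintro u rfl
          exact hu0
      have hKcard : (J ∪ U).ncard = s := by
        rw [← Set.union_diff_self, Set.ncard_union_eq Set.disjoint_sdiff_right
          (Set.toFinite _) (Set.toFinite _), hJcard, hUJsingle, Set.ncard_singleton]
        omega
      have hFFI : FF P T I = J ∪ U := by
        apply subset_antisymm
        · apply idealGen_subset (idealUnion hJideal hUideal)
          rintro j ⟨y', ⟨x, hx, rfl⟩, hj⟩
          classical
          set x' : Fin n → F := x - Pi.single m (x m) with hx'def
          have hx' : x' ∈ coordSub F I' := by
            intro l hl
            by_cases hlm : l = m
            · subst hlm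
              rw [hx'def, Pi.sub_apply, Pi.single_eq_same, sub_self]
            · have hlI : l ∉ I := fun hlI => hl ⟨hlI, hlm⟩
              rw [hx'def, Pi.sub_apply, Pi.single_eq_of_ne (M := fun _ => F) hlm,
                hx l hlI, sub_zero]
          have hTx' : T x' ∈ coordSub F J := by
            rw [← hJeq]
            exact ⟨x', hx', rfl⟩
          have hdecomp : (T : (Fin n → F) →ₗ[F] (Fin n → F)) x = x m • T em + T x' := by
            show T x = x m • T em + T x'
            rw [← map_smul, ← map_add]
            congr 1
            rw [hemdef, ← single_eq_smul, hx'def]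
            abel
          rw [hdecomp, Pi.add_apply] at hj
          by_cases hTx'j : T x' j = 0
          · rw [hTx'j, add_zero] at hj
            have hTem : T em j ≠ 0 := by
              intro h0
              apply hj
              rw [Pi.smul_apply, h0, smul_zero]
            exact Or.inr (subset_idealGen hTem)
          · exact Or.inl (mem_coordSub_vsupp.mp hTx' hTx'j)
        · apply Set.union_subset
          · exact FF_mono T Set.diff_subset
          · apply idealGen_mono
            intro j hj
            exact ⟨T em, ⟨em, hemI, rfl⟩, hj⟩
      refine ⟨by rw [hFFI, hKcard], ?_⟩
      apply Submodule.eq_of_le_of_finrank_le (map_le_FF T I)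
      rw [finrank_coordSub, hFFI, hKcard, LinearEquiv.finrank_map_eq, finrank_coordSub, hs]
    · -- union case
      have hImlt : Im.ncard < s := by
        rw [← hs]
        exact Set.ncard_lt_ncard (Set.ssubset_iff_subset_ne.mpr ⟨hImI, hImeq⟩) (Set.toFinite I)
      have hIunion : I = I' ∪ Im := by
        ext i
        constructor
        · intro hi
          by_cases him : i = m
          · exact Or.inr (him ▸ subset_idealGen rfl)
          · exact Or.inl ⟨hi, him⟩
        · rintro (hi | hi)
          · exact hi.1
          · exact hImI hi
      obtain ⟨hc1, he1⟩ := IH (s - 1) (by omega) I' hI' hI'card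
      obtain ⟨hc2, he2⟩ := IH Im.ncard hImlt Im hImideal rfl
      have hint : IsPosetIdeal P (I' ∩ Im) := idealInter hI' hImideal
      have hintlt : (I' ∩ Im).ncard < s :=
        lt_of_le_of_lt (Set.ncard_le_ncard Set.inter_subset_right (Set.toFinite _)) hImlt
      obtain ⟨hc3, he3⟩ := IH _ hintlt _ hint rfl
      have hmapsup : Submodule.map (T : (Fin n → F) →ₗ[F] (Fin n → F)) (coordSub F I)
          = coordSub F (FF P T I' ∪ FF P T Im) := by
        rw [hIunion, coordSub_union, Submodule.map_sup, he1, he2, ← coordSub_union]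
      have hFFideal : IsPosetIdeal P (FF P T I' ∪ FF P T Im) :=
        idealUnion (FF_isIdeal T I') (FF_isIdeal T Im)
      have hFFI : FF P T I = FF P T I' ∪ FF P T Im := by
        rw [FF_def, hmapsup, suppS_coordSub, idealGen_of_isIdeal hFFideal]
      have hFFint : FF P T (I' ∩ Im) = FF P T I' ∩ FF P T Im := by
        apply coordSub_injective (F := F)
        rw [← he3, coordSub_inter (FF P T I') (FF P T Im), ← he1, ← he2,
          ← Submodule.map_inf (T : (Fin n → F) →ₗ[F] (Fin n → F)) T.injective, ← coordSub_inter]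
      have h4 := Set.ncard_union_add_ncard_inter I' Im (Set.toFinite _) (Set.toFinite _)
      have h5 := Set.ncard_union_add_ncard_inter (FF P T I') (FF P T Im)
        (Set.toFinite _) (Set.toFinite _)
      rw [← hFFint, hc1, hc2, hc3] at h5
      rw [← hIunion, hs] at h4
      refine ⟨by rw [hFFI]; omega, ?_⟩
      rw [hFFI]
      exact hmapsup

end PQAux

namespace PQAux

variable {F : Type*} [Field F] {n : ℕ} {P : PartialOrder (Fin n)}

lemma exists_perm {T : (Fin n → F) ≃ₗ[F] (Fin n → F)} (hT : IsPIsometry P T) :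
    ∃ σ : Equiv.Perm (Fin n), ∀ i, vsupp (T (Pi.single i 1)) ⊆ ⇑σ '' (idealGen P {i}) := by
  classical
  have hIiideal : ∀ i : Fin n, IsPosetIdeal P (idealGen P ({i} : Set (Fin n))) :=
    fun i => idealGen_isIdeal _
  have hmemIi : ∀ i : Fin n, i ∈ idealGen P ({i} : Set (Fin n)) := fun i => subset_idealGen rfl
  set Ii' : Fin n → Set (Fin n) := fun i => idealGen P {i} \ {i} with hIi'def
  have hIi'ideal : ∀ i, IsPosetIdeal P (Ii' i) := by
    intro i
    rintro a ⟨haI, hai⟩ j hja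
    refine ⟨hIiideal i a haI j hja, ?_⟩
    intro hji
    rw [Set.mem_singleton_iff] at hji
    subst hji
    apply hai
    rw [Set.mem_singleton_iff]
    obtain ⟨k, hk, hak⟩ := mem_idealGen.mp haI
    rcases hk with rfl
    exact P.le_antisymm _ _ hak hja
  have hIicard : ∀ i, 1 ≤ (idealGen P ({i} : Set (Fin n))).ncard := fun i =>
    (Set.ncard_pos (Set.toFinite _)).mpr ⟨i, hmemIi i⟩
  have hIi'card : ∀ i, (Ii' i).ncard = (idealGen P ({i} : Set (Fin n))).ncard - 1 := fun i => by
    rw [hIi'def, Set.ncard_diff_singleton_of_mem (hmemIi i)]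
  have main := fun (I : Set (Fin n)) (hI : IsPosetIdeal P I) => FF_main hT I.ncard I hI rfl
  have hmono : ∀ {a b : Fin n}, P.le a b →
      idealGen P ({a} : Set (Fin n)) ⊆ idealGen P ({b} : Set (Fin n)) := by
    intro a b hab
    apply idealGen_subset (hIiideal b)
    rintro k rfl
    exact mem_idealGen.mpr ⟨b, rfl, hab⟩
  have hdiffne : ∀ i, (FF P T (idealGen P {i}) \ FF P T (Ii' i)).Nonempty := by
    intro i
    rw [Set.diff_nonempty]
    intro hsub
    have h1 := Set.ncard_le_ncard hsub (Set.toFinite _)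
    rw [(main _ (hIiideal i)).1, (main _ (hIi'ideal i)).1, hIi'card i] at h1
    have := hIicard i
    omega
  choose σ0 hσ0 using hdiffne
  have hinj : Function.Injective σ0 := by
    have hcase : ∀ a b : Fin n, a ≠ b → σ0 a = σ0 b → ¬ P.le a b := by
      intro a b hab hσ hle
      have h1 : idealGen P ({a} : Set (Fin n)) ⊆ Ii' b := by
        intro k hk
        refine ⟨hmono hle hk, ?_⟩
        intro hkb
        rw [Set.mem_singleton_iff] at hkb
        subst hkb
        obtain ⟨a', ha', hka⟩ := mem_idealGen.mp hk
        rcases ha' with rfl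
        exact hab (P.le_antisymm _ _ hle hka)
      have h2 : σ0 a ∈ FF P T (Ii' b) := FF_mono T h1 (hσ0 a).1
      rw [hσ] at h2
      exact (hσ0 b).2 h2
    intro i j hij
    by_contra hne
    have hnle1 : ¬ P.le i j := hcase i j hne hij
    have hnle2 : ¬ P.le j i := hcase j i (fun h => hne h.symm) hij.symm
    have hsub : idealGen P ({i} : Set (Fin n)) ∩ idealGen P ({j} : Set (Fin n)) ⊆ Ii' i := by
      rintro k ⟨hki, hkj⟩
      refine ⟨hki, ?_⟩
      intro hkeq
      rw [Set.mem_singleton_iff] at hkeq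
      subst hkeq
      obtain ⟨j', hj', hkj'⟩ := mem_idealGen.mp hkj
      rcases hj' with rfl
      exact hnle1 hkj'
    have hint : IsPosetIdeal P (idealGen P ({i} : Set (Fin n)) ∩ idealGen P {j}) :=
      idealInter (hIiideal i) (hIiideal j)
    have hFint : FF P T (idealGen P ({i} : Set (Fin n)) ∩ idealGen P {j})
        = FF P T (idealGen P {i}) ∩ FF P T (idealGen P {j}) := by
      apply coordSub_injective (F := F)
      rw [← (main _ hint).2, coordSub_inter (FF P T (idealGen P {i})) (FF P T (idealGen P {j})),
        ← (main _ (hIiideal i)).2, ← (main _ (hIiideal j)).2,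
        ← Submodule.map_inf (T : (Fin n → F) →ₗ[F] (Fin n → F)) T.injective, ← coordSub_inter]
    have hmem : σ0 i ∈ FF P T (idealGen P ({i} : Set (Fin n)) ∩ idealGen P {j}) := by
      rw [hFint]
      exact ⟨(hσ0 i).1, hij ▸ (hσ0 j).1⟩
    exact (hσ0 i).2 (FF_mono T hsub hmem)
  set σ : Equiv.Perm (Fin n) := Equiv.ofBijective σ0 (Finite.injective_iff_bijective.mp hinj)
    with hσdef
  refine ⟨σ, fun i => ?_⟩
  have h1 : ⇑σ '' idealGen P ({i} : Set (Fin n)) ⊆ FF P T (idealGen P {i}) := by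
    rintro _ ⟨k, hk, rfl⟩
    have hk' : P.le k i := by
      obtain ⟨i', hi', h⟩ := mem_idealGen.mp hk
      rcases hi' with rfl
      exact h
    show σ0 k ∈ _
    exact FF_mono T (hmono hk') (hσ0 k).1
  have h2 : ⇑σ '' idealGen P ({i} : Set (Fin n)) = FF P T (idealGen P {i}) := by
    apply Set.eq_of_subset_of_ncard_le h1 _ (Set.toFinite _)
    rw [Set.ncard_image_of_injective _ σ.injective, (main _ (hIiideal i)).1]
  rw [h2]
  intro j hj
  exact subset_idealGen ⟨T (Pi.single i 1), ⟨Pi.single i 1, single_mem_coordSub (hmemIi i) 1, rfl⟩, hj⟩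

variable (F) in
/-- The linear automorphism induced by a permutation: `(permL σ) x = x ∘ σ`. -/
def permL (σ : Equiv.Perm (Fin n)) : (Fin n → F) ≃ₗ[F] (Fin n → F) where
  toFun x := x ∘ σ
  invFun x := x ∘ σ.symm
  map_add' x y := rfl
  map_smul' c x := rfl
  left_inv x := by funext j; simp
  right_inv x := by funext j; simp

lemma permL_apply (σ : Equiv.Perm (Fin n)) (x : Fin n → F) (j : Fin n) :
    permL F σ x j = x (σ j) := rfl

lemma suppS_map_permL (σ : Equiv.Perm (Fin n)) (D : Submodule F (Fin n → F)) :
    suppS (Submodule.map ((permL F σ) : (Fin n → F) →ₗ[F] (Fin n → F)) D) = ⇑σ ⁻¹' suppS D := by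
  ext j
  constructor
  · rintro ⟨y, ⟨x, hx, rfl⟩, hj⟩
    exact ⟨x, hx, hj⟩
  · rintro ⟨x, hx, hj⟩
    exact ⟨permL F σ x, ⟨x, hx, rfl⟩, hj⟩

lemma ncard_preimage_perm (σ : Equiv.Perm (Fin n)) (S : Set (Fin n)) :
    (⇑σ ⁻¹' S).ncard = S.ncard := by
  have h : ⇑σ ⁻¹' S = ⇑σ.symm '' S := by
    ext k
    constructor
    · intro hk
      exact ⟨σ k, hk, by simp⟩
    · rintro ⟨s, hs, rfl⟩
      simpa using hs
  rw [h, Set.ncard_image_of_injective _ σ.symm.injective]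

end PQAux

open PQAux in
/-- **Theorem 2.** If `P ≤ Q` (every `P`-relation is a `Q`-relation),
then every linear code `C` has a primary `P`-decomposition which is also a
`Q`-decomposition of `C`. -/
theorem primary_P_is_Q_decomposition {F : Type*} [Field F] [Fintype F] {n : ℕ}
    (P Q : PartialOrder (Fin n)) (hPQ : ∀ i j : Fin n, P.le i j → Q.le i j)
    (C : Submodule F (Fin n → F)) :
    ∃ d : PDecomposition P C, d.IsPrimary ∧
      ∃ S : (Fin n → F) ≃ₗ[F] (Fin n → F), IsPIsometry Q S ∧
        Submodule.map (S : (Fin n → F) →ₗ[F] (Fin n → F)) C = d.C' := by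
  classical
  -- there exists at least one P-decomposition of C
  have hne : Nonempty (PDecomposition P C) := by
    by_cases h : C = ⊥
    · refine ⟨{ C' := C
                T := LinearEquiv.refl F _
                isom := fun x y => rfl
                image := by rw [LinearEquiv.refl_toLinearMap, Submodule.map_id]
                dec := { r := 0
                         D := Fin.elim0
                         ne_bot := fun i => i.elim0
                         indep := iSupIndep_def.mpr (fun i => i.elim0)
                         sup_eq := by rw [h]; exact iSup_of_empty _
                         disj := fun i => i.elim0 } }⟩
    · refine ⟨{ C' := C
                T := LinearEquiv.refl F _
                isom := fun x y => rfl
                image := by rw [LinearEquiv.refl_toLinearMap, Submodule.map_id]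
                dec := { r := 1
                         D := fun _ => C
                         ne_bot := fun _ => h
                         indep := iSupIndep_def.mpr (by
                           intro i
                           have h0 : (⨆ (j : Fin 1) (_ : j ≠ i), C) = ⊥ := by
                             apply le_bot_iff.mp
                             apply iSup_le
                             intro j
                             apply iSup_le
                             intro hj
                             exact absurd (Subsingleton.elim j i) hj
                           rw [h0]
                           exact disjoint_bot_right)
                         sup_eq := iSup_const
                         disj := fun i j hij => absurd (Subsingleton.elim i j) hij } }⟩
  -- take a complexity-minimizing P-decomposition
  obtain ⟨d1⟩ := hne
  have hSne : {m | ∃ d : PDecomposition P C, d.complexity = m}.Nonempty :=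
    ⟨d1.complexity, d1, rfl⟩
  obtain ⟨d0, hd0⟩ := Nat.sInf_mem hSne
  -- extract a permutation and triangularize
  obtain ⟨σ, hσ⟩ := exists_perm d0.isom
  set e := permL F σ with hedef
  set B := d0.T ≪≫ₗ e with hBdef
  have hBcol : ∀ i j, B (Pi.single i 1) j ≠ 0 → P.le j i := by
    intro i j hj
    have hj' : d0.T (Pi.single i 1) (σ j) ≠ 0 := hj
    obtain ⟨k, hk, hσk⟩ := hσ i hj'
    have hkj : k = j := σ.injective hσk
    subst hkj
    obtain ⟨i', hi', h⟩ := mem_idealGen.mp hk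
    rcases hi' with rfl
    exact h
  have hBtri := tri_of_cols hBcol
  have hBisoP : IsPIsometry P B := hBtri.isPIsometry (fun i j h => h)
  have hBisoQ : IsPIsometry Q B := hBtri.isPIsometry hPQ
  -- transport the decomposition of d0.C' along the permutation
  have hCeq : Submodule.map (B : (Fin n → F) →ₗ[F] (Fin n → F)) C
      = Submodule.map (e : (Fin n → F) →ₗ[F] (Fin n → F)) d0.C' := by
    rw [hBdef, LinearEquiv.coe_trans, Submodule.map_comp, d0.image]
  have hmapbot : ∀ D : Submodule F (Fin n → F),
      Submodule.map (e : (Fin n → F) →ₗ[F] (Fin n → F)) D ≠ ⊥ → D ≠ ⊥ := by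
    intro D h hD
    apply h
    rw [hD, Submodule.map_bot]
  let dec' : Decomposition (Submodule.map (B : (Fin n → F) →ₗ[F] (Fin n → F)) C) :=
  { r := d0.dec.r
    D := fun i => Submodule.map (e : (Fin n → F) →ₗ[F] (Fin n → F)) (d0.dec.D i)
    ne_bot := fun i h => d0.dec.ne_bot i (by
      have := congrArg (Submodule.map ((e.symm : (Fin n → F) ≃ₗ[F] (Fin n → F))
        : (Fin n → F) →ₗ[F] (Fin n → F))) h
      rwa [← Submodule.map_comp, Submodule.map_bot, ← LinearEquiv.coe_trans,
        LinearEquiv.self_trans_symm, LinearEquiv.refl_toLinearMap, Submodule.map_id] at this)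
    indep := by
      have h := d0.dec.indep.map_orderIso (Submodule.orderIsoMapComap e)
      have hfun : (⇑(Submodule.orderIsoMapComap e) ∘ d0.dec.D)
          = fun i => Submodule.map (e : (Fin n → F) →ₗ[F] (Fin n → F)) (d0.dec.D i) := by
        funext i
        show Submodule.map (e : (Fin n → F) →ₗ[F] (Fin n → F)) (d0.dec.D i) = _
        ext x
        simp only [Submodule.mem_map, LinearEquiv.coe_coe]
      rwa [hfun] at h
    sup_eq := by
      rw [← Submodule.map_iSup, d0.dec.sup_eq, hCeq]
    disj := by
      intro i j hij
      rw [suppS_map_permL, suppS_map_permL]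
      exact (d0.dec.disj hij).preimage ⇑σ }
  let d : PDecomposition P C :=
  { C' := Submodule.map (B : (Fin n → F) →ₗ[F] (Fin n → F)) C
    T := B
    isom := hBisoP
    image := rfl
    dec := dec' }
  have hcomp : d.complexity = d0.complexity := by
    show (∑ i, (Fintype.card F) ^ ((suppS (dec'.D i)).ncard - Module.finrank F (dec'.D i))) = _
    apply Finset.sum_congr rfl
    intro i _
    show (Fintype.card F) ^
        ((suppS (Submodule.map (e : (Fin n → F) →ₗ[F] (Fin n → F)) (d0.dec.D i))).ncard
          - Module.finrank F (Submodule.map (e : (Fin n → F) →ₗ[F] (Fin n → F)) (d0.dec.D i))) = _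
    rw [suppS_map_permL, ncard_preimage_perm, LinearEquiv.finrank_map_eq]
  refine ⟨d, fun d' => ?_, B, hBisoQ, rfl⟩
  rw [hcomp, hd0]
  exact Nat.sInf_le ⟨d', rfl⟩
end

section
/- Let P and Q be posets on [n] with P ≤ Q (i.e., i ⪯_P j implies i ⪯_Q j). Then O_Q(C) ≤ O_P(C) for every [n,k]_q linear code C ⊆ F_q^n. -/
namespace PosetAux

variable {F : Type*} [Field F] {n : ℕ} {P : PartialOrder (Fin n)}

lemma mem_idealGen {X : Set (Fin n)} {j : Fin n} :
    j ∈ idealGen P X ↔ ∃ i ∈ X, P.le j i := by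
  constructor
  · intro h
    exact Set.mem_sInter.1 h {j | ∃ i ∈ X, P.le j i}
      ⟨fun a ⟨i, hi, hai⟩ b hba => ⟨i, hi, P.le_trans _ _ _ hba hai⟩,
       fun i hi => ⟨i, hi, P.le_refl i⟩⟩
  · rintro ⟨i, hiX, hji⟩
    refine Set.mem_sInter.2 fun I hI => hI.1 i (hI.2 hiX) j hji

lemma isPosetIdeal_idealGen (P : PartialOrder (Fin n)) (X : Set (Fin n)) :
    IsPosetIdeal P (idealGen P X) := by
  intro i hi j hji
  obtain ⟨k, hk, hik⟩ := mem_idealGen.1 hi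
  exact mem_idealGen.2 ⟨k, hk, P.le_trans _ _ _ hji hik⟩

lemma subset_idealGen (P : PartialOrder (Fin n)) (X : Set (Fin n)) : X ⊆ idealGen P X :=
  fun i hi => mem_idealGen.2 ⟨i, hi, P.le_refl i⟩

lemma idealGen_subset {X I : Set (Fin n)} (hI : IsPosetIdeal P I) (hX : X ⊆ I) :
    idealGen P X ⊆ I := by
  intro j hj
  obtain ⟨i, hi, hji⟩ := mem_idealGen.1 hj
  exact hI i (hX hi) j hji

lemma idealGen_eq_self {I : Set (Fin n)} (hI : IsPosetIdeal P I) : idealGen P I = I :=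
  subset_antisymm (idealGen_subset hI subset_rfl) (subset_idealGen P I)

lemma mem_idealGen_singleton {u j : Fin n} : j ∈ idealGen P {u} ↔ P.le j u := by
  rw [mem_idealGen]
  constructor
  · rintro ⟨i, hi, hji⟩; rwa [Set.mem_singleton_iff.1 hi] at hji
  · intro h; exact ⟨u, rfl, h⟩

lemma self_mem_idealGen_singleton (u : Fin n) : u ∈ idealGen P {u} :=
  mem_idealGen_singleton.2 (P.le_refl u)

lemma idealGen_singleton_inj {u v : Fin n}
    (h : idealGen P {u} = (idealGen P {v} : Set (Fin n))) : u = v := by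
  have h1 : P.le u v := mem_idealGen_singleton.1 (h ▸ self_mem_idealGen_singleton u)
  have h2 : P.le v u := mem_idealGen_singleton.1 (h ▸ self_mem_idealGen_singleton v)
  exact P.le_antisymm _ _ h1 h2

/-- The subspace of vectors supported inside `I`. -/
def VS (F : Type*) [Field F] {n : ℕ} (I : Set (Fin n)) : Submodule F (Fin n → F) where
  carrier := {x | ∀ j ∉ I, x j = 0}
  add_mem' := fun ha hb j hj => by
    rw [Pi.add_apply, ha j hj, hb j hj, add_zero]
  zero_mem' := fun j _ => rfl
  smul_mem' := fun c a ha j hj => by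
    rw [Pi.smul_apply, ha j hj, smul_zero]

lemma mem_VS {I : Set (Fin n)} {x : Fin n → F} : x ∈ VS F I ↔ ∀ j ∉ I, x j = 0 := Iff.rfl

lemma VS_mono {I J : Set (Fin n)} (h : I ⊆ J) : VS F I ≤ VS F J :=
  fun x hx j hj => hx j (fun hji => hj (h hji))

lemma single_mem_VS {I : Set (Fin n)} {i : Fin n} (hi : i ∈ I) (c : F) :
    Pi.single i c ∈ VS F I := by
  intro j hj
  have hji : j ≠ i := fun h => hj (by rw [h]; exact hi)
  simp [Pi.single_eq_of_ne hji]

lemma subset_of_VS_le {I J : Set (Fin n)} (h : VS F I ≤ VS F J) : I ⊆ J := by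
  intro i hi
  by_contra hiJ
  have := h (single_mem_VS hi (1 : F)) i hiJ
  rw [Pi.single_eq_same] at this
  exact one_ne_zero this

lemma VS_inj {I J : Set (Fin n)} (h : VS F I = VS F J) : I = J :=
  subset_antisymm (subset_of_VS_le h.le) (subset_of_VS_le h.ge)

lemma VS_empty : VS F (∅ : Set (Fin n)) = ⊥ := by
  ext x
  rw [Submodule.mem_bot]
  constructor
  · intro h; funext j; exact h j (Set.notMem_empty j)
  · intro h j _; rw [h]; rfl

lemma VS_union {I J : Set (Fin n)} : VS F (I ∪ J) = VS F I ⊔ VS F J := by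
  classical
  refine le_antisymm ?_ (sup_le (VS_mono Set.subset_union_left)
    (VS_mono Set.subset_union_right))
  intro x hx
  have hx1 : (fun j => if j ∈ I then x j else 0) ∈ VS F I := by
    intro j hj; simp [hj]
  have hx2 : (x - fun j => if j ∈ I then x j else 0) ∈ VS F J := by
    intro j hj
    by_cases hI : j ∈ I
    · simp [hI]
    · have : x j = 0 := hx j (by simp [hI, hj])
      simp [hI, this]
  have : x = (fun j => if j ∈ I then x j else 0) +
      (x - fun j => if j ∈ I then x j else 0) := by ring
  rw [this]
  exact Submodule.add_mem _ (Submodule.mem_sup_left hx1) (Submodule.mem_sup_right hx2)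

noncomputable def VSequiv (I : Set (Fin n)) : (VS F I) ≃ₗ[F] (I → F) := by
  classical
  exact
  { toFun := fun x i => (x : Fin n → F) i
    map_add' := fun x y => rfl
    map_smul' := fun c x => rfl
    invFun := fun y => ⟨fun j => if h : j ∈ I then y ⟨j, h⟩ else 0, fun j hj => dif_neg hj⟩
    left_inv := fun x => by
      apply Subtype.ext
      funext j
      by_cases h : j ∈ I
      · simp [h]
      · simp only [dif_neg h]
        exact (x.2 j h).symm
    right_inv := fun y => by
      funext i
      simp [i.2] }

lemma finrank_VS (I : Set (Fin n)) : Module.finrank F (VS F I) = I.ncard := by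
  classical
  haveI : Fintype I := I.toFinite.fintype
  rw [(VSequiv I).finrank_eq, Module.finrank_pi, Set.ncard_eq_toFinset_card']
  simp [Set.toFinset_card]

lemma supp_subset_of_mem_VS {I : Set (Fin n)} {x : Fin n → F} (hx : x ∈ VS F I) :
    {j | x j ≠ 0} ⊆ I := by
  intro j hj
  by_contra h
  exact hj (hx j h)

lemma mem_VS_of_supp_subset {I : Set (Fin n)} {x : Fin n → F} (h : {j | x j ≠ 0} ⊆ I) :
    x ∈ VS F I := by
  intro j hj
  by_contra h0
  exact hj (h h0)

lemma weight_map {T : (Fin n → F) ≃ₗ[F] (Fin n → F)} (hT : IsPIsometry P T)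
    (v : Fin n → F) : posetWeight P (T v) = posetWeight P v := by
  have := hT v 0
  simpa [posetDist, map_zero] using this

lemma isometry_symm {T : (Fin n → F) ≃ₗ[F] (Fin n → F)} (hT : IsPIsometry P T) :
    IsPIsometry P T.symm := by
  intro x y
  have := hT (T.symm x) (T.symm y)
  simpa using this.symm

lemma exists_maximal (P : PartialOrder (Fin n)) {I : Set (Fin n)} (hne : I.Nonempty) :
    ∃ u ∈ I, ∀ v ∈ I, P.le u v → v = u := by
  classical
  obtain ⟨u, huI, hmax⟩ := Finset.exists_max_image I.toFinite.toFinset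
    (fun u => (Finset.univ.filter fun w => P.le w u).card)
    (by rwa [Set.Finite.toFinset_nonempty])
  refine ⟨u, I.toFinite.mem_toFinset.1 huI, fun v hv huv => ?_⟩
  by_contra hvu
  have hsub : (Finset.univ.filter fun w => P.le w u) ⊂ (Finset.univ.filter fun w => P.le w v) := by
    constructor
    · intro w hw
      simp only [Finset.mem_filter, Finset.mem_univ, true_and] at hw ⊢
      exact P.le_trans _ _ _ hw huv
    · intro hcon
      have hv' : v ∈ Finset.univ.filter fun w => P.le w v := by
        simp [P.le_refl]
      have := hcon hv'
      simp only [Finset.mem_filter, Finset.mem_univ, true_and] at this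
      exact hvu (P.le_antisymm _ _ this huv)
  have := Finset.card_lt_card hsub
  have := hmax v (I.toFinite.mem_toFinset.2 hv)
  omega

end PosetAux
namespace PosetAux

variable {F : Type*} [Field F] {n : ℕ} {P : PartialOrder (Fin n)}

theorem mainLemma (P : PartialOrder (Fin n)) (T : (Fin n → F) ≃ₗ[F] (Fin n → F))
    (hT : IsPIsometry P T) (m : ℕ) :
    ∀ (I : Set (Fin n)), IsPosetIdeal P I → I.ncard = m →
    ∃ J, IsPosetIdeal P J ∧ J.ncard = m ∧
      Submodule.map (T : (Fin n → F) →ₗ[F] (Fin n → F)) (VS F I) = VS F J := by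
  classical
  induction m using Nat.strong_induction_on with
  | _ m ih =>
    intro I hI hm
    rcases Nat.eq_zero_or_pos m with h0 | hpos
    · subst h0
      have hIe : I = ∅ := (Set.ncard_eq_zero I.toFinite).1 hm
      subst hIe
      exact ⟨∅, fun i hi => absurd hi (Set.notMem_empty i), Set.ncard_empty _,
        by rw [VS_empty, Submodule.map_bot]⟩
    · have hne : I.Nonempty := Set.nonempty_of_ncard_ne_zero (by omega)
      obtain ⟨u, huI, humax⟩ := exists_maximal P hne
      have hAI : idealGen P {u} ⊆ I := idealGen_subset hI (by simpa using huI)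
      -- `I \ {u}` is an ideal of cardinality `m - 1`
      have hB : IsPosetIdeal P (I \ {u}) := by
        intro i hi j hj
        refine ⟨hI i hi.1 j hj, fun hju => ?_⟩
        rw [Set.mem_singleton_iff] at hju
        subst hju
        exact hi.2 (humax i hi.1 hj)
      have hBcard : (I \ {u}).ncard = m - 1 := by
        rw [Set.ncard_diff_singleton_of_mem huI, hm]
      by_cases hprin : I ⊆ idealGen P {u}
      · -- principal case
        obtain ⟨J', hJ', hJ'card, hmapI'⟩ := ih (m - 1) (by omega) (I \ {u}) hB hBcard
        set y : Fin n → F := T (Pi.single u 1) with hy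
        have hynot : y ∉ VS F J' := by
          intro hyJ
          rw [← hmapI'] at hyJ
          obtain ⟨v, hv, hTv⟩ := hyJ
          have hveq : v = Pi.single u 1 := T.injective hTv
          subst hveq
          have := hv u (by simp)
          rw [Pi.single_eq_same] at this
          exact one_ne_zero this
        obtain ⟨j0, hj0J, hj0y⟩ : ∃ j0, j0 ∉ J' ∧ y j0 ≠ 0 := by
          by_contra hcon
          push_neg at hcon
          exact hynot (fun j hj => hcon j hj)
        set z : Fin n → F := fun j => if j ∈ J' ∧ y j = 0 then 1 else 0 with hz
        have hzJ : z ∈ VS F J' := by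
          intro j hj
          simp only [hz]
          rw [if_neg]
          tauto
        set w : Fin n → F := y + z with hw
        have hwsupp : ∀ j, j ∈ J' ∪ {i | y i ≠ 0} → w j ≠ 0 := by
          intro j hj
          by_cases hyj : y j = 0
          · have hjJ : j ∈ J' := by
              rcases hj with h | h
              · exact h
              · exact absurd hyj h
            show y j + z j ≠ 0
            rw [hyj, zero_add]
            show (if j ∈ J' ∧ y j = 0 then (1 : F) else 0) ≠ 0
            rw [if_pos ⟨hjJ, hyj⟩]
            exact one_ne_zero
          · show y j + z j ≠ 0
            have hzj : z j = 0 := if_neg (fun h => hyj h.2)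
            rw [hzj, add_zero]
            exact hyj
        have hwmem : w ∈ Submodule.map (T : (Fin n → F) →ₗ[F] (Fin n → F)) (VS F I) := by
          apply Submodule.add_mem
          · exact ⟨Pi.single u 1, single_mem_VS huI 1, rfl⟩
          · have : z ∈ Submodule.map (T : (Fin n → F) →ₗ[F] (Fin n → F)) (VS F (I \ {u})) := by
              rw [hmapI']; exact hzJ
            exact Submodule.map_mono (VS_mono Set.diff_subset) this
        obtain ⟨v, hvI, hTv⟩ := hwmem
        have hwt : (idealGen P {j | w j ≠ 0}).ncard ≤ m := by
          have h1 : posetWeight P w = posetWeight P v := by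
            rw [← weight_map hT v]
            congr 1
            exact hTv.symm
          have h2 : posetWeight P v ≤ m := by
            have hsub : idealGen P {i | v i ≠ 0} ⊆ I :=
              idealGen_subset hI (supp_subset_of_mem_VS hvI)
            calc posetWeight P v ≤ I.ncard := Set.ncard_le_ncard hsub I.toFinite
            _ = m := hm
          calc (idealGen P {j | w j ≠ 0}).ncard = posetWeight P w := rfl
          _ = posetWeight P v := h1
          _ ≤ m := h2
        set K := idealGen P {j | w j ≠ 0} with hK
        have hsubK : J' ∪ {i | y i ≠ 0} ⊆ K := by
          intro j hj
          exact subset_idealGen P _ (hwsupp j hj)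
        have hJ'K : J' ⊆ K := fun j hj => hsubK (Or.inl hj)
        have hKcard : K.ncard = m := by
          have hlt : J'.ncard < K.ncard :=
            Set.ncard_lt_ncard
              ⟨hJ'K, fun hKJ' => hj0J (hKJ' (hsubK (Or.inr hj0y)))⟩ K.toFinite
          omega
        refine ⟨K, isPosetIdeal_idealGen P _, hKcard, ?_⟩
        have hIsplit : I = (I \ {u}) ∪ {u} := by
          rw [Set.diff_union_self]
          exact (Set.union_eq_self_of_subset_right (by simpa using huI)).symm
        have hle : Submodule.map (T : (Fin n → F) →ₗ[F] (Fin n → F)) (VS F I) ≤ VS F K := by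
          rw [hIsplit, VS_union, Submodule.map_sup, hmapI']
          apply sup_le
          · exact VS_mono hJ'K
          · rintro _ ⟨x, hx, rfl⟩
            have hxeq : x = (x u) • (Pi.single u 1 : Fin n → F) := by
              funext j
              by_cases hj : j = u
              · subst hj; simp
              · rw [hx j (by simpa using hj)]
                have : j ≠ u := hj
                simp [Pi.single_eq_of_ne this]
            rw [hxeq, map_smul]
            apply Submodule.smul_mem
            have hyK : y ∈ VS F K :=
              mem_VS_of_supp_subset (fun j hj => hsubK (Or.inr hj))
            exact hyK
        apply Submodule.eq_of_le_of_finrank_eq hle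
        rw [LinearEquiv.finrank_map_eq, finrank_VS, finrank_VS, hm, hKcard]
      · -- non-principal case
        have hAcard : (idealGen P {u}).ncard < m := by
          rw [← hm]
          exact Set.ncard_lt_ncard ⟨hAI, fun h => hprin h⟩ I.toFinite
        obtain ⟨JA, hJA, hJAcard, hmapA⟩ := ih _ hAcard (idealGen P {u})
          (isPosetIdeal_idealGen P _) rfl
        obtain ⟨JB, hJB, hJBcard, hmapB⟩ := ih (m - 1) (by omega) (I \ {u}) hB hBcard
        have hIsplit : I = idealGen P {u} ∪ (I \ {u}) := by
          apply subset_antisymm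
          · intro i hi
            by_cases hiu : i = u
            · subst hiu; exact Or.inl (self_mem_idealGen_singleton i)
            · exact Or.inr ⟨hi, by simpa using hiu⟩
          · exact Set.union_subset hAI Set.diff_subset
        have hmap : Submodule.map (T : (Fin n → F) →ₗ[F] (Fin n → F)) (VS F I)
            = VS F (JA ∪ JB) := by
          rw [hIsplit, VS_union, Submodule.map_sup, hmapA, hmapB, VS_union]
        refine ⟨JA ∪ JB, ?_, ?_, hmap⟩
        · intro i hi j hj
          rcases hi with h | h
          · exact Or.inl (hJA i h j hj)
          · exact Or.inr (hJB i h j hj)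
        · have := LinearEquiv.finrank_map_eq T (VS F I)
          rw [hmap, finrank_VS, finrank_VS, hm] at this
          exact this

end PosetAux
namespace PosetAux

variable {F : Type*} [Field F] {n : ℕ} {P Q : PartialOrder (Fin n)}

lemma map_symm_map (e : (Fin n → F) ≃ₗ[F] (Fin n → F)) (p : Submodule F (Fin n → F)) :
    Submodule.map (e.symm : (Fin n → F) →ₗ[F] (Fin n → F))
      (Submodule.map (e : (Fin n → F) →ₗ[F] (Fin n → F)) p) = p := by
  ext x
  constructor
  · rintro ⟨y, ⟨z, hz, rfl⟩, rfl⟩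
    simpa using hz
  · intro hx
    exact ⟨e x, ⟨x, hx, rfl⟩, by simp⟩

lemma diff_max_ideal {I : Set (Fin n)} {u : Fin n} (hI : IsPosetIdeal P I)
    (humax : ∀ v ∈ I, P.le u v → v = u) : IsPosetIdeal P (I \ {u}) := by
  intro i hi j hj
  refine ⟨hI i hi.1 j hj, fun hju => ?_⟩
  rw [Set.mem_singleton_iff] at hju
  subst hju
  exact hi.2 (humax i hi.1 hj)

lemma split_at {I : Set (Fin n)} {u : Fin n} (hI : IsPosetIdeal P I) (hu : u ∈ I) :
    I = idealGen P {u} ∪ (I \ {u}) := by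
  apply subset_antisymm
  · intro i hi
    by_cases hiu : i = u
    · subst hiu; exact Or.inl (self_mem_idealGen_singleton i)
    · exact Or.inr ⟨hi, by simpa using hiu⟩
  · exact Set.union_subset (idealGen_subset hI (by simpa using hu)) Set.diff_subset

lemma exists_gen (T : (Fin n → F) ≃ₗ[F] (Fin n → F)) (hT : IsPIsometry P T) (u : Fin n) :
    ∃ b : Fin n, Submodule.map (T : (Fin n → F) →ₗ[F] (Fin n → F)) (VS F (idealGen P {u}))
      = VS F (idealGen P {b}) := by
  classical
  obtain ⟨J, hJ, hJcard, hmap⟩ := mainLemma P T hT (idealGen P {u}).ncard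
    (idealGen P {u}) (isPosetIdeal_idealGen P _) rfl
  have hm1 : 0 < (idealGen P {u}).ncard :=
    (Set.ncard_pos (Set.toFinite _)).2 ⟨u, self_mem_idealGen_singleton u⟩
  have hJne : J.Nonempty := Set.nonempty_of_ncard_ne_zero (by omega)
  obtain ⟨b, hbJ, hbmax⟩ := exists_maximal P hJne
  have hAJ : idealGen P {b} ⊆ J := idealGen_subset hJ (by simpa using hbJ)
  suffices hJA : J ⊆ idealGen P {b} by
    refine ⟨b, ?_⟩
    rw [hmap]
    congr 1
    exact subset_antisymm hJA hAJ
  by_contra hnot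
  have hTs := isometry_symm hT
  have hBid : IsPosetIdeal P (J \ {b}) := diff_max_ideal hJ hbmax
  have hAcard : (idealGen P {b}).ncard < J.ncard :=
    Set.ncard_lt_ncard ⟨hAJ, hnot⟩ J.toFinite
  have hBcard : (J \ {b}).ncard = J.ncard - 1 :=
    Set.ncard_diff_singleton_of_mem hbJ
  obtain ⟨A', hA', hA'card, hmapA⟩ := mainLemma P T.symm hTs _ (idealGen P {b})
    (isPosetIdeal_idealGen P _) rfl
  obtain ⟨B', hB', hB'card, hmapB⟩ := mainLemma P T.symm hTs _ (J \ {b}) hBid rfl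
  have h2 : VS F (idealGen P {u}) = Submodule.map
      (T.symm : (Fin n → F) →ₗ[F] (Fin n → F)) (VS F J) := by
    rw [← hmap, map_symm_map]
  have hVI : VS F (idealGen P {u}) = VS F (A' ∪ B') := by
    rw [h2, split_at hJ hbJ, VS_union, Submodule.map_sup, hmapA, hmapB, VS_union]
  have hIeq : idealGen P {u} = A' ∪ B' := VS_inj hVI
  have humem : u ∈ A' ∪ B' := by rw [← hIeq]; exact self_mem_idealGen_singleton u
  rcases humem with h | h
  · have hsub : idealGen P {u} ⊆ A' := idealGen_subset hA' (by simpa using h)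
    have hsub' : A' ⊆ idealGen P {u} := by
      rw [hIeq]; exact Set.subset_union_left
    have heq : A' = idealGen P {u} := subset_antisymm hsub' hsub
    rw [heq] at hA'card
    omega
  · have hsub : idealGen P {u} ⊆ B' := idealGen_subset hB' (by simpa using h)
    have hsub' : B' ⊆ idealGen P {u} := by
      rw [hIeq]; exact Set.subset_union_right
    have heq : B' = idealGen P {u} := subset_antisymm hsub' hsub
    rw [heq] at hB'card
    omega

lemma supp_T (T : (Fin n → F) ≃ₗ[F] (Fin n → F)) (s : Fin n → Fin n)
    (hs : ∀ u, Submodule.map (T : (Fin n → F) →ₗ[F] (Fin n → F)) (VS F (idealGen P {u}))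
      = VS F (idealGen P {s u})) :
    ∀ (x : Fin n → F) (j : Fin n), T x j ≠ 0 → ∃ i, x i ≠ 0 ∧ P.le j (s i) := by
  classical
  intro x j hj
  have hx : (T x : Fin n → F) = ∑ i, (T (Pi.single i (x i)) : Fin n → F) := by
    conv_lhs => rw [← Finset.univ_sum_single x]
    rw [map_sum]
  by_contra hcon
  push_neg at hcon
  apply hj
  rw [hx, Finset.sum_apply]
  apply Finset.sum_eq_zero
  intro i _
  by_cases hxi : x i = 0
  · rw [hxi]
    simp
  · have hy : (T (Pi.single i (x i)) : Fin n → F) ∈ VS F (idealGen P {s i}) := by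
      rw [← hs i]
      exact ⟨_, single_mem_VS (self_mem_idealGen_singleton i) _, rfl⟩
    exact hy j (fun hjm => hcon i hxi (mem_idealGen_singleton.1 hjm))

/-- The linear equivalence `x ↦ x ∘ e` induced by a permutation of coordinates. -/
def permE (F : Type*) [Field F] {n : ℕ} (e : Equiv.Perm (Fin n)) :
    (Fin n → F) ≃ₗ[F] (Fin n → F) where
  toFun x := x ∘ e
  invFun x := x ∘ e.symm
  map_add' x y := rfl
  map_smul' c x := rfl
  left_inv x := by funext j; simp
  right_inv x := by funext j; simp

lemma permE_apply (e : Equiv.Perm (Fin n)) (x : Fin n → F) (j : Fin n) :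
    permE F e x j = x (e j) := rfl

lemma exists_U (hPQ : ∀ i j : Fin n, P.le i j → Q.le i j)
    (T : (Fin n → F) ≃ₗ[F] (Fin n → F)) (hT : IsPIsometry P T) :
    ∃ e : Equiv.Perm (Fin n), IsPIsometry Q (T.trans (permE F e)) := by
  classical
  have hTs := isometry_symm hT
  choose s hs using exists_gen T hT
  choose s' hs' using exists_gen T.symm hTs
  have hss' : ∀ u, s' (s u) = u := by
    intro u
    have h1 := hs' (s u)
    have h2 : VS F (idealGen P {u}) = Submodule.map
        (T.symm : (Fin n → F) →ₗ[F] (Fin n → F)) (VS F (idealGen P {s u})) := by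
      rw [← hs u, map_symm_map]
    exact (idealGen_singleton_inj (VS_inj (h2.trans h1))).symm
  have hs's : ∀ u, s (s' u) = u := by
    intro u
    have h1 := hs (s' u)
    have h2 : VS F (idealGen P {u}) = Submodule.map
        (T : (Fin n → F) →ₗ[F] (Fin n → F)) (VS F (idealGen P {s' u})) := by
      rw [← hs' u]
      have := map_symm_map (e := T.symm) (p := VS F (idealGen P {u}))
      rw [T.symm_symm] at this
      rw [this]
    exact (idealGen_singleton_inj (VS_inj (h2.trans h1))).symm
  set e : Equiv.Perm (Fin n) := ⟨s, s', hss', hs's⟩ with he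
  have hs'mono : ∀ a b, P.le a b → P.le (s' a) (s' b) := by
    intro a b hab
    have h1 : VS F (idealGen P {s' a}) ≤ VS F (idealGen P {s' b}) := by
      rw [← hs' a, ← hs' b]
      exact Submodule.map_mono (VS_mono (idealGen_subset (isPosetIdeal_idealGen P _)
        (by simpa using mem_idealGen_singleton.2 hab)))
    exact mem_idealGen_singleton.1
      ((subset_of_VS_le h1) (self_mem_idealGen_singleton (s' a)))
  have hsupp := supp_T (P := P) T s hs
  have hsupp' := supp_T (P := P) T.symm s' hs'
  refine ⟨e, ?_⟩
  have hw : ∀ z : Fin n → F, posetWeight Q ((T.trans (permE F e)) z) = posetWeight Q z := by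
    intro z
    unfold posetWeight
    congr 1
    apply subset_antisymm
    · apply idealGen_subset (isPosetIdeal_idealGen Q _)
      intro j hj
      have hj' : (T z) (s j) ≠ 0 := hj
      obtain ⟨i, hxi, hle⟩ := hsupp z (s j) hj'
      have hji : P.le j i := by
        have := hs'mono _ _ hle
        rwa [hss', hss'] at this
      exact mem_idealGen.2 ⟨i, hxi, hPQ j i hji⟩
    · apply idealGen_subset (isPosetIdeal_idealGen Q _)
      intro i hi
      have hzi : (T.symm (T z)) i ≠ 0 := by
        rw [T.symm_apply_apply]
        exact hi
      obtain ⟨k, hk, hle⟩ := hsupp' (T z) i hzi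
      refine mem_idealGen.2 ⟨s' k, ?_, hPQ _ _ hle⟩
      show ((T.trans (permE F e)) z) (s' k) ≠ 0
      have heq : ((T.trans (permE F e)) z) (s' k) = (T z) (s (s' k)) := rfl
      rw [heq, hs's]
      exact hk
  intro x y
  unfold posetDist
  rw [← map_sub, hw]

end PosetAux
namespace PosetAux

variable {F : Type*} [Field F] {n : ℕ} {P Q : PartialOrder (Fin n)}

lemma suppS_map_permE (e : Equiv.Perm (Fin n)) (D : Submodule F (Fin n → F)) :
    suppS (Submodule.map (permE F e : (Fin n → F) →ₗ[F] (Fin n → F)) D) = ⇑e ⁻¹' suppS D := by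
  ext j
  constructor
  · rintro ⟨x, ⟨y, hy, rfl⟩, hx⟩
    exact ⟨y, hy, hx⟩
  · rintro ⟨y, hy, hyj⟩
    exact ⟨permE F e y, ⟨y, hy, rfl⟩, hyj⟩

lemma ncard_suppS_map (e : Equiv.Perm (Fin n)) (D : Submodule F (Fin n → F)) :
    (suppS (Submodule.map (permE F e : (Fin n → F) →ₗ[F] (Fin n → F)) D)).ncard
      = (suppS D).ncard := by
  rw [suppS_map_permE, ← Equiv.image_symm_eq_preimage,
    Set.ncard_image_of_injective _ e.symm.injective]

lemma exists_Qdec [Fintype F] {C : Submodule F (Fin n → F)}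
    (hPQ : ∀ i j : Fin n, P.le i j → Q.le i j) (d : PDecomposition P C) :
    ∃ d' : PDecomposition Q C, d'.complexity = d.complexity := by
  obtain ⟨e, hU⟩ := exists_U hPQ d.T d.isom
  set Pe : (Fin n → F) ≃ₗ[F] (Fin n → F) := permE F e with hPe
  refine ⟨⟨Submodule.map (Pe : (Fin n → F) →ₗ[F] (Fin n → F)) d.C', d.T.trans Pe, hU, ?_,
    { r := d.dec.r
      D := fun i => Submodule.map (Pe : (Fin n → F) →ₗ[F] (Fin n → F)) (d.dec.D i)
      ne_bot := ?_
      indep := ?_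
      sup_eq := ?_
      disj := ?_ }⟩, ?_⟩
  · rw [LinearEquiv.coe_trans, Submodule.map_comp, d.image]
  · intro i h
    apply d.dec.ne_bot i
    have := congrArg (Submodule.map (Pe.symm : (Fin n → F) →ₗ[F] (Fin n → F))) h
    rwa [map_symm_map, Submodule.map_bot] at this
  · exact (iSupIndep_map_orderIso_iff (Submodule.orderIsoMapComap Pe)).2 d.dec.indep
  · rw [← Submodule.map_iSup, d.dec.sup_eq]
  · intro i j hij
    rw [suppS_map_permE, suppS_map_permE]
    exact (d.dec.disj hij).preimage ⇑e
  · unfold PDecomposition.complexity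
    apply Finset.sum_congr rfl
    intro i _
    rw [ncard_suppS_map, LinearEquiv.finrank_map_eq]

lemma nonempty_pdec (P : PartialOrder (Fin n)) (C : Submodule F (Fin n → F)) :
    Nonempty (PDecomposition P C) := by
  classical
  by_cases hC : C = ⊥
  · refine ⟨⟨C, LinearEquiv.refl F _, fun x y => rfl, by simp, 
      ⟨0, fun i => i.elim0, fun i => i.elim0, fun i => i.elim0, ?_, fun i => i.elim0⟩⟩⟩
    rw [iSup_of_empty]
    exact hC.symm
  · refine ⟨⟨C, LinearEquiv.refl F _, fun x y => rfl, by simp,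
      ⟨1, fun _ => C, fun _ => hC, ?_, iSup_const, fun i j hij =>
        absurd (Subsingleton.elim i j) hij⟩⟩⟩
    intro i
    have h0 : (⨆ j, ⨆ (_ : j ≠ i), (fun _ : Fin 1 => C) j) = ⊥ := by
      apply le_bot_iff.1
      apply iSup_le
      intro j
      apply iSup_le
      intro hj
      exact absurd (Subsingleton.elim j i) hj
    exact h0 ▸ disjoint_bot_right

end PosetAux
/-- **Corollary.** If `P ≤ Q` (every `P`-relation is a `Q`-relation),
then `O_Q(C) ≤ O_P(C)` for every `[n,k]_q` linear code `C ⊆ F_q^n`. -/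
theorem minComplexity_antitone {F : Type*} [Field F] [Fintype F] {n : ℕ}
    (P Q : PartialOrder (Fin n)) (hPQ : ∀ i j : Fin n, P.le i j → Q.le i j)
    (C : Submodule F (Fin n → F)) :
    minComplexity Q C ≤ minComplexity P C := by
  obtain ⟨d0⟩ := PosetAux.nonempty_pdec P C
  have hne : {m | ∃ d : PDecomposition P C, d.complexity = m}.Nonempty :=
    ⟨d0.complexity, d0, rfl⟩
  obtain ⟨d, hd⟩ := Nat.sInf_mem hne
  obtain ⟨d', hd'⟩ := PosetAux.exists_Qdec hPQ d
  calc minComplexity Q C ≤ d'.complexity := Nat.sInf_le ⟨d', rfl⟩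
  _ = d.complexity := hd'
  _ = minComplexity P C := hd
end
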